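/- arXiv:1609.04589 — 7 statements merged into one kernel-verified Lean document; each statement's English description precedes it below -/
import Mathlib

section
/- Let ω > 0 and c ∈ ℝ with c² < 4ω. Define f(ω,c) = 8√ω · arctan(√((2√ω + c)/(2√ω - c))) - 2√(4ω - c²). Then ∂f/∂c = 2(c + 2√ω)/√(4ω - c²), which is strictly positive for -2√ω < c < 2√ω. -/
open Real

/-- derivative in `c` of
`f(ω,c) = 8√ω · arctan(√((2√ω+c)/(2√ω-c))) - 2√(4ω-c²)`
equals `2(c+2√ω)/√(4ω-c²)`, which is positive. -/
theorem stmt0 (ω c : ℝ) (hω : 0 < ω)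
    (hc1 : -2 * Real.sqrt ω < c) (hc2 : c < 2 * Real.sqrt ω) :
    HasDerivAt (fun c : ℝ =>
        8 * Real.sqrt ω *
            Real.arctan (Real.sqrt ((2 * Real.sqrt ω + c) / (2 * Real.sqrt ω - c)))
          - 2 * Real.sqrt (4 * ω - c ^ 2))
      (2 * (c + 2 * Real.sqrt ω) / Real.sqrt (4 * ω - c ^ 2)) c ∧
    0 < 2 * (c + 2 * Real.sqrt ω) / Real.sqrt (4 * ω - c ^ 2) := by
  set s := 2 * Real.sqrt ω with hs_def
  have hsqrtω : 0 < Real.sqrt ω := Real.sqrt_pos.mpr hω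
  have hs : 0 < s := by positivity
  have hc1' : -s < c := by simpa [hs_def, neg_mul] using hc1
  have hA : 0 < s + c := by linarith
  have hB : 0 < s - c := by linarith
  have hs2 : s ^ 2 = 4 * ω := by
    rw [hs_def, mul_pow, Real.sq_sqrt hω.le]; ring
  have h4 : 4 * ω - c ^ 2 = (s + c) * (s - c) := by nlinarith
  have h4pos : 0 < 4 * ω - c ^ 2 := by rw [h4]; positivity
  have hu : HasDerivAt (fun c : ℝ => (s + c) / (s - c)) (2 * s / (s - c) ^ 2) c := by
    have h1 : HasDerivAt (fun c : ℝ => s + c) 1 c := by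
      simpa using (hasDerivAt_id c).const_add s
    have h2 : HasDerivAt (fun c : ℝ => s - c) (-1) c := by
      simpa using (hasDerivAt_id c).const_sub s
    have := h1.div h2 (ne_of_gt hB)
    refine this.congr_deriv ?_
    ring
  have hupos : 0 < (s + c) / (s - c) := div_pos hA hB
  have hsu : HasDerivAt (fun c : ℝ => Real.sqrt ((s + c) / (s - c)))
      (1 / (2 * Real.sqrt ((s + c) / (s - c))) * (2 * s / (s - c) ^ 2)) c :=
    (Real.hasDerivAt_sqrt (ne_of_gt hupos)).comp c hu
  have hat : HasDerivAt (fun c : ℝ => Real.arctan (Real.sqrt ((s + c) / (s - c))))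
      ((1 / (1 + Real.sqrt ((s + c) / (s - c)) ^ 2)) *
        (1 / (2 * Real.sqrt ((s + c) / (s - c))) * (2 * s / (s - c) ^ 2))) c :=
    (Real.hasDerivAt_arctan _).comp c hsu
  have hsq : HasDerivAt (fun c : ℝ => 4 * ω - c ^ 2) (-(2 * c)) c := by
    have := (hasDerivAt_pow 2 c).const_sub (4 * ω)
    simpa using this
  have hsr : HasDerivAt (fun c : ℝ => Real.sqrt (4 * ω - c ^ 2))
      (1 / (2 * Real.sqrt (4 * ω - c ^ 2)) * (-(2 * c))) c :=
    (Real.hasDerivAt_sqrt (ne_of_gt h4pos)).comp c hsq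
  have hmain := (hat.const_mul (8 * Real.sqrt ω)).sub (hsr.const_mul 2)
  have hAB : Real.sqrt (4 * ω - c ^ 2) = Real.sqrt (s + c) * Real.sqrt (s - c) := by
    rw [h4, Real.sqrt_mul hA.le]
  have hdiv : Real.sqrt ((s + c) / (s - c)) = Real.sqrt (s + c) / Real.sqrt (s - c) :=
    Real.sqrt_div hA.le _
  have hA2 : Real.sqrt (s + c) ^ 2 = s + c := Real.sq_sqrt hA.le
  have hB2 : Real.sqrt (s - c) ^ 2 = s - c := Real.sq_sqrt hB.le
  have hApos : 0 < Real.sqrt (s + c) := Real.sqrt_pos.mpr hA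
  have hBpos : 0 < Real.sqrt (s - c) := Real.sqrt_pos.mpr hB
  have h8 : 8 * Real.sqrt ω = 4 * s := by rw [hs_def]; ring
  constructor
  · refine hmain.congr_deriv ?_
    rw [hAB, hdiv, h8]
    set A := Real.sqrt (s + c) with hAdef
    set B := Real.sqrt (s - c) with hBdef
    have hcval : c = (A ^ 2 - B ^ 2) / 2 := by rw [hA2, hB2]; ring
    have hsval : s = (A ^ 2 + B ^ 2) / 2 := by rw [hA2, hB2]; ring
    rw [hcval, hsval]
    have hAne : A ≠ 0 := ne_of_gt hApos
    have hBne : B ≠ 0 := ne_of_gt hBpos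
    field_simp
    ring
  · apply div_pos
    · linarith
    · exact Real.sqrt_pos.mpr h4pos
end

section
/- For any complex-valued v ∈ H¹(ℝ) and real parameters ω, c, the Nehari functional I(v) = ‖v_x‖²_{L²} + Im∫_ℝ |v|² conj(v) v_x dx + ω‖v‖²_{L²} + c·Im∫_ℝ v conj(v_x) dx can be rewritten as I(v) = ‖v_x - (ic/2)v + (i/2)|v|²v‖²_{L²} + (ω - c²/4)‖v‖²_{L²} + (c/2)‖v‖⁴_{L⁴} - (1/4)‖v‖⁶_{L⁶}. -/
open MeasureTheory

private lemma mul_L2 {f g : ℝ → ℂ} (hf : MemLp f 2 volume) (hg : MemLp g 2 volume) :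
    Integrable (fun x => f x * g x) volume := by
  have hfi := (memLp_two_iff_integrable_sq_norm hf.1).1 hf
  have hgi := (memLp_two_iff_integrable_sq_norm hg.1).1 hg
  refine (hfi.add hgi).mono' (hf.1.mul hg.1) (Filter.Eventually.of_forall fun x => ?_)
  calc ‖f x * g x‖ = ‖f x‖ * ‖g x‖ := norm_mul _ _
    _ ≤ ‖f x‖ ^ 2 + ‖g x‖ ^ 2 := by
        nlinarith [sq_nonneg (‖f x‖ - ‖g x‖), norm_nonneg (f x), norm_nonneg (g x)]


/-- rewriting of the Nehari functional
`I(v) = ‖v_x‖² + Im∫|v|²conj(v)v_x + ω‖v‖² + c·Im∫v·conj(v_x)` as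
`‖v_x - (ic/2)v + (i/2)|v|²v‖² + (ω-c²/4)‖v‖² + (c/2)‖v‖⁴_{L⁴} - (1/4)‖v‖⁶_{L⁶}`. -/
theorem stmt3 (ω c : ℝ) (v v' : ℝ → ℂ)
    (hderiv : ∀ x, HasDerivAt v (v' x) x)
    (hv2 : MemLp v 2 volume) (hv'2 : MemLp v' 2 volume)
    (hv4 : MemLp v 4 volume) (hv6 : MemLp v 6 volume) :
    (∫ x, ‖v' x‖ ^ 2)
      + (∫ x, (((‖v x‖ ^ 2 : ℝ) : ℂ) * (starRingEnd ℂ) (v x) * v' x).im)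
      + ω * (∫ x, ‖v x‖ ^ 2)
      + c * (∫ x, (v x * (starRingEnd ℂ) (v' x)).im)
    = (∫ x, ‖v' x - (Complex.I * (c / 2)) * v x
          + (Complex.I / 2) * ((‖v x‖ ^ 2 : ℝ) : ℂ) * v x‖ ^ 2)
      + (ω - c ^ 2 / 4) * (∫ x, ‖v x‖ ^ 2)
      + (c / 2) * (∫ x, ‖v x‖ ^ 4)
      - (1 / 4) * (∫ x, ‖v x‖ ^ 6) := by
  -- pointwise identity
  have key : ∀ x, ‖v' x - (Complex.I * (c / 2)) * v x
          + (Complex.I / 2) * ((‖v x‖ ^ 2 : ℝ) : ℂ) * v x‖ ^ 2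
      = ‖v' x‖ ^ 2 + (((‖v x‖ ^ 2 : ℝ) : ℂ) * (starRingEnd ℂ) (v x) * v' x).im
        + c * (v x * (starRingEnd ℂ) (v' x)).im
        + (c ^ 2 / 4) * ‖v x‖ ^ 2 - (c / 2) * ‖v x‖ ^ 4 + (1 / 4) * ‖v x‖ ^ 6 := by
    intro x
    set w := v x; set z := v' x
    have hsq : ∀ u : ℂ, ‖u‖ ^ 2 = u.re ^ 2 + u.im ^ 2 := fun u => by
      rw [Complex.sq_norm, Complex.normSq_apply]; ring
    have h4 : ‖w‖ ^ 4 = (‖w‖ ^ 2) ^ 2 := by ring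
    have h6 : ‖w‖ ^ 6 = (‖w‖ ^ 2) ^ 3 := by ring
    rw [h4, h6]
    simp only [hsq, Complex.add_re, Complex.add_im, Complex.sub_re, Complex.sub_im,
      Complex.mul_re, Complex.mul_im, Complex.I_re, Complex.I_im, Complex.ofReal_re,
      Complex.ofReal_im, Complex.div_re, Complex.div_im, Complex.conj_re, Complex.conj_im,
      Complex.normSq_apply, Complex.ofReal_add, Complex.ofReal_mul, Complex.re_ofNat,
      Complex.im_ofNat]
    ring
  -- measurability
  have hvm : AEStronglyMeasurable v volume := hv2.1
  have hv'm : AEStronglyMeasurable v' volume := hv'2.1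
  -- integrability of powers of ‖v‖
  have ipow : ∀ (n : ℕ) (f : ℝ → ℂ), MemLp f n volume → 0 < n →
      Integrable (fun x => ‖f x‖ ^ n) volume := by
    intro n f hf hn
    have := hf.integrable_norm_rpow (by exact_mod_cast hn.ne') (by simp)
    refine this.congr (Filter.Eventually.of_forall fun x => ?_)
    simp [ENNReal.toReal_natCast, Real.rpow_natCast]
  have iD : Integrable (fun x => ‖v x‖ ^ 2) volume := ipow 2 v hv2 (by norm_num)
  have iE4 : Integrable (fun x => ‖v x‖ ^ 4) volume := ipow 4 v hv4 (by norm_num)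
  have iE6 : Integrable (fun x => ‖v x‖ ^ 6) volume := ipow 6 v hv6 (by norm_num)
  have iA : Integrable (fun x => ‖v' x‖ ^ 2) volume := ipow 2 v' hv'2 (by norm_num)
  -- MemLp of |v|² conj v in L²
  have hwm : AEStronglyMeasurable (fun x => ((‖v x‖ ^ 2 : ℝ) : ℂ) * (starRingEnd ℂ) (v x))
      volume := by
    refine AEStronglyMeasurable.mul ?_ (Complex.continuous_conj.comp_aestronglyMeasurable hvm)
    exact Complex.continuous_ofReal.comp_aestronglyMeasurable
      (hvm.norm.aemeasurable.pow_const 2).aestronglyMeasurable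
  have hw2 : MemLp (fun x => ((‖v x‖ ^ 2 : ℝ) : ℂ) * (starRingEnd ℂ) (v x)) 2 volume := by
    refine (memLp_two_iff_integrable_sq_norm hwm).2 ?_
    refine iE6.congr (Filter.Eventually.of_forall fun x => ?_)
    simp [norm_mul, abs_of_nonneg (sq_nonneg ‖v x‖)]
    ring
  -- MemLp of conj v'
  have hc2 : MemLp (fun x => (starRingEnd ℂ) (v' x)) 2 volume := by
    refine hv'2.of_le (Complex.continuous_conj.comp_aestronglyMeasurable hv'm)
      (Filter.Eventually.of_forall fun x => ?_)
    simp
  have iB : Integrable (fun x => (((‖v x‖ ^ 2 : ℝ) : ℂ) * (starRingEnd ℂ) (v x) * v' x).im)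
      volume := (mul_L2 hw2 hv'2).im
  have iC : Integrable (fun x => (v x * (starRingEnd ℂ) (v' x)).im) volume :=
    (mul_L2 hv2 hc2).im
  have expand : (∫ x, ‖v' x - (Complex.I * (c / 2)) * v x
          + (Complex.I / 2) * ((‖v x‖ ^ 2 : ℝ) : ℂ) * v x‖ ^ 2)
      = (∫ x, ‖v' x‖ ^ 2)
        + (∫ x, (((‖v x‖ ^ 2 : ℝ) : ℂ) * (starRingEnd ℂ) (v x) * v' x).im)
        + c * (∫ x, (v x * (starRingEnd ℂ) (v' x)).im)
        + (c ^ 2 / 4) * (∫ x, ‖v x‖ ^ 2)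
        - (c / 2) * (∫ x, ‖v x‖ ^ 4)
        + (1 / 4) * (∫ x, ‖v x‖ ^ 6) := by
    simp_rw [key]
    have i1 : Integrable (fun x => ‖v' x‖ ^ 2
        + (((‖v x‖ ^ 2 : ℝ) : ℂ) * (starRingEnd ℂ) (v x) * v' x).im) volume := iA.add iB
    have i2 : Integrable (fun x => ‖v' x‖ ^ 2
        + (((‖v x‖ ^ 2 : ℝ) : ℂ) * (starRingEnd ℂ) (v x) * v' x).im
        + c * (v x * (starRingEnd ℂ) (v' x)).im) volume := i1.add (iC.const_mul c)
    have i3 : Integrable (fun x => ‖v' x‖ ^ 2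
        + (((‖v x‖ ^ 2 : ℝ) : ℂ) * (starRingEnd ℂ) (v x) * v' x).im
        + c * (v x * (starRingEnd ℂ) (v' x)).im
        + (c ^ 2 / 4) * ‖v x‖ ^ 2) volume := i2.add (iD.const_mul (c ^ 2 / 4))
    have i4 : Integrable (fun x => ‖v' x‖ ^ 2
        + (((‖v x‖ ^ 2 : ℝ) : ℂ) * (starRingEnd ℂ) (v x) * v' x).im
        + c * (v x * (starRingEnd ℂ) (v' x)).im
        + (c ^ 2 / 4) * ‖v x‖ ^ 2 - (c / 2) * ‖v x‖ ^ 4) volume := i3.sub (iE4.const_mul (c / 2))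
    rw [integral_add i4 (iE6.const_mul (1 / 4)), integral_sub i3 (iE4.const_mul _),
      integral_add i2 (iD.const_mul _), integral_add i1 (iC.const_mul _),
      integral_add iA iB, integral_const_mul, integral_const_mul, integral_const_mul,
      integral_const_mul]
  rw [expand]; ring
end

section
/- There exists δ > 0 such that for every v ∈ H¹(ℝ;ℂ), v ≠ 0, satisfying I(v) = 0 (where I is the Nehari functional I(v) = ‖v_x‖² + Im∫|v|²conj(v)v_x + ω‖v‖²_{L²} + c·Im∫v·conj(v_x)) with 4ω > c², one has ‖v‖²_{H¹} > δ. Consequently the Nehari minimum m_N = inf{S(v) : v ∈ H¹∖{0}, I(v)=0} is strictly positive, where S(v) = E(v) + ωM(v) + cP(v) with E(v) = (1/2)‖v_x‖² + (1/4)Im∫|v|²conj(v)v_x, M(v) = (1/2)‖v‖²_{L²}, P(v) = (1/2)Im∫v·conj(v_x). -/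
open MeasureTheory

/-- `v ∈ H¹(ℝ;ℂ)` with weak derivative `v'` (data given as a pair). -/
def H1pair (v v' : ℝ → ℂ) : Prop :=
  (∀ x, HasDerivAt v (v' x) x) ∧ MemLp v 2 volume ∧ MemLp v' 2 volume

/-- The Nehari functional `I(v)`. -/
noncomputable def Ifun (ω c : ℝ) (v v' : ℝ → ℂ) : ℝ :=
  (∫ x, ‖v' x‖ ^ 2)
    + (∫ x, (((‖v x‖ ^ 2 : ℝ) : ℂ) * (starRingEnd ℂ) (v x) * v' x).im)
    + ω * (∫ x, ‖v x‖ ^ 2)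
    + c * (∫ x, (v x * (starRingEnd ℂ) (v' x)).im)

/-- The action `S = E + ωM + cP`. -/
noncomputable def Sfun (ω c : ℝ) (v v' : ℝ → ℂ) : ℝ :=
  ((1 / 2) * (∫ x, ‖v' x‖ ^ 2)
      + (1 / 4) * (∫ x, (((‖v x‖ ^ 2 : ℝ) : ℂ) * (starRingEnd ℂ) (v x) * v' x).im))
    + ω * ((1 / 2) * ∫ x, ‖v x‖ ^ 2)
    + c * ((1 / 2) * ∫ x, (v x * (starRingEnd ℂ) (v' x)).im)

/-! ### Auxiliary lemmas -/

lemma quadform (ω c : ℝ) (hωc : c ^ 2 < 4 * ω) :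
    ∃ ε > (0:ℝ), ∀ x y : ℝ, 0 ≤ x → 0 ≤ y →
      |c| * x * y + ε * (x ^ 2 + y ^ 2) ≤ y ^ 2 + ω * x ^ 2 := by
  have hω : 0 < ω := by nlinarith [sq_nonneg c]
  set ε : ℝ := (4 * ω - c ^ 2) / (4 * (1 + ω)) with hε
  have hden : 0 < 4 * (1 + ω) := by linarith
  have hεpos : 0 < ε := div_pos (by linarith) hden
  have h1 : 0 < 1 - ε := by
    rw [hε]; rw [sub_pos, div_lt_one hden]; nlinarith [sq_nonneg c]
  have hkey : c ^ 2 ≤ 4 * (1 - ε) * (ω - ε) := by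
    have h1e : 1 - ε = (4 + c ^ 2) / (4 * (1 + ω)) := by rw [hε]; field_simp; ring
    have h2e : ω - ε = (4 * ω ^ 2 + c ^ 2) / (4 * (1 + ω)) := by rw [hε]; field_simp; ring
    rw [← sub_nonneg, h1e, h2e]
    have expand : 4 * ((4 + c ^ 2) / (4 * (1 + ω))) * ((4 * ω ^ 2 + c ^ 2) / (4 * (1 + ω)))
        - c ^ 2 = (4 * ω - c ^ 2) ^ 2 / (4 * (1 + ω) ^ 2) := by
      field_simp
      ring
    rw [expand]
    positivity
  refine ⟨ε, hεpos, fun x y hx hy => ?_⟩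
  have ha : |c| ^ 2 = c ^ 2 := sq_abs c
  have ha0 : 0 ≤ |c| := abs_nonneg c
  nlinarith [sq_nonneg (2 * (1 - ε) * y - |c| * x), mul_nonneg (mul_nonneg hx hx) h1.le,
    mul_nonneg hx hy]

lemma normsq_hasDerivAt (v v' : ℝ → ℂ) (hd : ∀ x, HasDerivAt v (v' x) x) (x : ℝ) :
    HasDerivAt (fun t => ‖v t‖ ^ 2) (2 * ((starRingEnd ℂ) (v x) * v' x).re) x := by
  have hconj : HasDerivAt (fun t => (starRingEnd ℂ) (v t)) ((starRingEnd ℂ) (v' x)) x := by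
    exact (Complex.conjCLE.hasFDerivAt.comp_hasDerivAt x (hd x))
  have hmul := hconj.mul (hd x)
  have hre := Complex.reCLM.hasFDerivAt.comp_hasDerivAt x hmul
  have heq : (⇑Complex.reCLM ∘ ((fun t => (starRingEnd ℂ) (v t)) * v)) = fun t => ‖v t‖ ^ 2 := by
    funext t
    simp only [Function.comp_apply, Pi.mul_apply, Complex.reCLM_apply]
    rw [mul_comm, Complex.mul_conj', ← Complex.ofReal_pow, Complex.ofReal_re]
  rw [heq] at hre
  refine hre.congr_deriv ?_
  have : ((starRingEnd ℂ) (v' x) * v x).re = ((starRingEnd ℂ) (v x) * v' x).re := by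
    rw [show (starRingEnd ℂ) (v' x) * v x = (starRingEnd ℂ) ((starRingEnd ℂ) (v x) * v' x) by
      simp [map_mul]; ring]
    exact (Complex.conj_re _)
  simp only [map_add, Complex.reCLM_apply, Complex.add_re, this]
  ring

lemma sobolev (v v' : ℝ → ℂ) (hd : ∀ x, HasDerivAt v (v' x) x)
    (hm' : AEStronglyMeasurable v' volume)
    (hI2 : Integrable (fun x => ‖v x‖ ^ 2)) (hI2' : Integrable (fun x => ‖v' x‖ ^ 2)) (x : ℝ) :
    ‖v x‖ ^ 2 ≤ (∫ t, ‖v t‖ ^ 2) + (∫ t, ‖v' t‖ ^ 2) := by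
  set g : ℝ → ℝ := fun t => ‖v t‖ ^ 2 with hgdef
  set g' : ℝ → ℝ := fun t => 2 * ((starRingEnd ℂ) (v t) * v' t).re with hg'def
  set h : ℝ → ℝ := fun t => ‖v t‖ ^ 2 + ‖v' t‖ ^ 2 with hhdef
  have hg : ∀ t, HasDerivAt g (g' t) t := fun t => normsq_hasDerivAt v v' hd t
  have hcv : Continuous v := by
    rw [continuous_iff_continuousAt]; exact fun t => (hd t).continuousAt
  have hIh : Integrable h := hI2.add hI2'
  have hbound : ∀ t, |g' t| ≤ h t := by
    intro t
    have h1 : |((starRingEnd ℂ) (v t) * v' t).re| ≤ ‖v t‖ * ‖v' t‖ := by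
      calc |((starRingEnd ℂ) (v t) * v' t).re| ≤ ‖(starRingEnd ℂ) (v t) * v' t‖ :=
            Complex.abs_re_le_norm _
        _ = ‖v t‖ * ‖v' t‖ := by rw [norm_mul, RCLike.norm_conj]
    have h2 : 2 * (‖v t‖ * ‖v' t‖) ≤ ‖v t‖ ^ 2 + ‖v' t‖ ^ 2 := by
      nlinarith [sq_nonneg (‖v t‖ - ‖v' t‖)]
    calc |g' t| = 2 * |((starRingEnd ℂ) (v t) * v' t).re| := by
          rw [hg'def, abs_mul]; norm_num
      _ ≤ 2 * (‖v t‖ * ‖v' t‖) := by linarith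
      _ ≤ h t := h2
  have hmg' : AEStronglyMeasurable g' volume :=
    ((Complex.continuous_re.comp_aestronglyMeasurable
      (((Complex.continuous_conj.comp hcv).aestronglyMeasurable).mul hm'))).const_mul 2
  have hIg' : Integrable g' :=
    hIh.mono' hmg' (Filter.Eventually.of_forall fun t => by
      simpa [Real.norm_eq_abs] using hbound t)
  have hhnn : 0 ≤ h := fun t => by positivity
  have key : ∀ a, a ≤ x → g x ≤ g a + ∫ t, h t := by
    intro a hax
    have hftc : ∫ t in a..x, g' t = g x - g a :=
      intervalIntegral.integral_eq_sub_of_hasDerivAt (fun t _ => hg t)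
        hIg'.intervalIntegrable
    have h1 : ∫ t in a..x, g' t ≤ ∫ t, h t := by
      rw [intervalIntegral.integral_of_le hax]
      calc ∫ t in Set.Ioc a x, g' t ≤ ∫ t in Set.Ioc a x, h t :=
            setIntegral_mono hIg'.integrableOn hIh.integrableOn
              (fun t => (abs_le.mp (hbound t)).2)
        _ ≤ ∫ t, h t := setIntegral_le_integral hIh (Filter.Eventually.of_forall hhnn)
    linarith
  have hsmall : ∀ ε : ℝ, 0 < ε → ∃ a, a ≤ x ∧ g a ≤ ε := by
    intro ε hε
    by_contra hcon
    push_neg at hcon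
    have hconst : IntegrableOn (fun _ : ℝ => ε) (Set.Iic x) volume := by
      refine Integrable.mono' hI2.integrableOn aestronglyMeasurable_const ?_
      rw [ae_restrict_iff' measurableSet_Iic]
      exact Filter.Eventually.of_forall fun a ha => by
        rw [Real.norm_eq_abs, abs_of_pos hε]; exact (hcon a ha).le
    rw [integrableOn_const_iff] at hconst
    rcases hconst with h0 | hfin
    · exact hε.ne' (enorm_eq_zero.mp h0)
    · rw [Real.volume_Iic] at hfin; exact (lt_irrefl _ hfin).elim
  have htotal : g x ≤ ∫ t, h t := by
    refine le_of_forall_pos_le_add fun ε hε => ?_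
    obtain ⟨a, hax, hga⟩ := hsmall ε hε
    have := key a hax
    linarith
  calc g x ≤ ∫ t, h t := htotal
    _ = (∫ t, ‖v t‖ ^ 2) + ∫ t, ‖v' t‖ ^ 2 := integral_add hI2 hI2'

/-- Positivity of the mass of a nonzero continuous function. -/
lemma mass_pos (v : ℝ → ℂ) (hcv : Continuous v) (hne : v ≠ 0)
    (hI2 : Integrable (fun x => ‖v x‖ ^ 2)) : 0 < ∫ x, ‖v x‖ ^ 2 := by
  rw [integral_pos_iff_support_of_nonneg (fun t => by positivity) hI2]
  obtain ⟨x0, hx0⟩ : ∃ x0, v x0 ≠ 0 := Function.ne_iff.mp hne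
  have hopen : IsOpen (Function.support fun x => ‖v x‖ ^ 2) := by
    have : Continuous fun x => ‖v x‖ ^ 2 := (hcv.norm.pow 2)
    exact isOpen_compl_singleton.preimage this
  refine hopen.measure_pos volume ⟨x0, ?_⟩
  simp [Function.mem_support, hx0]

/-- The key quantitative estimates on the Nehari manifold. -/
lemma keylem (ω c ε : ℝ) (hε : 0 < ε)
    (hq : ∀ x y : ℝ, 0 ≤ x → 0 ≤ y →
      |c| * x * y + ε * (x ^ 2 + y ^ 2) ≤ y ^ 2 + ω * x ^ 2)
    (v v' : ℝ → ℂ) (hp : H1pair v v') (hne : v ≠ 0) (hI0 : Ifun ω c v v' = 0) :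
    ε ≤ (∫ x, ‖v x‖ ^ 2) + (∫ x, ‖v' x‖ ^ 2) ∧
    ε ^ 2 ≤ (∫ x, ‖v' x‖ ^ 2) + ω * (∫ x, ‖v x‖ ^ 2)
      + c * (∫ x, (v x * (starRingEnd ℂ) (v' x)).im) := by
  obtain ⟨hd, hv2, hv'2⟩ := hp
  have hcv : Continuous v := by
    rw [continuous_iff_continuousAt]; exact fun t => (hd t).continuousAt
  have hm' : AEStronglyMeasurable v' volume := hv'2.aestronglyMeasurable
  have hI2 : Integrable (fun x => ‖v x‖ ^ 2) :=
    (memLp_two_iff_integrable_sq_norm hv2.aestronglyMeasurable).mp hv2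
  have hI2' : Integrable (fun x => ‖v' x‖ ^ 2) :=
    (memLp_two_iff_integrable_sq_norm hm').mp hv'2
  set n : ℝ := ∫ x, ‖v' x‖ ^ 2 with hn
  set m2 : ℝ := ∫ x, ‖v x‖ ^ 2 with hm2
  set S : ℝ := m2 + n with hS
  have hn0 : 0 ≤ n := integral_nonneg fun t => by positivity
  have hm2pos : 0 < m2 := mass_pos v hcv hne hI2
  have hSpos : 0 < S := by rw [hS]; linarith
  have hSob : ∀ x, ‖v x‖ ^ 2 ≤ S := fun x => sobolev v v' hd hm' hI2 hI2' x
  -- integrability of the momentum density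
  have hmes_p : AEStronglyMeasurable (fun x => (v x * (starRingEnd ℂ) (v' x)).im) volume :=
    Complex.continuous_im.comp_aestronglyMeasurable
      (hcv.aestronglyMeasurable.mul (Complex.continuous_conj.comp_aestronglyMeasurable hm'))
  have hbp : ∀ x, |(v x * (starRingEnd ℂ) (v' x)).im| ≤ ‖v x‖ ^ 2 + ‖v' x‖ ^ 2 := by
    intro x
    calc |(v x * (starRingEnd ℂ) (v' x)).im| ≤ ‖v x * (starRingEnd ℂ) (v' x)‖ :=
          Complex.abs_im_le_norm _
      _ = ‖v x‖ * ‖v' x‖ := by rw [norm_mul, RCLike.norm_conj]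
      _ ≤ ‖v x‖ ^ 2 + ‖v' x‖ ^ 2 := by nlinarith [sq_nonneg (‖v x‖ - ‖v' x‖), norm_nonneg (v x), norm_nonneg (v' x)]
  have hIp : Integrable (fun x => (v x * (starRingEnd ℂ) (v' x)).im) :=
    (hI2.add hI2').mono' hmes_p (Filter.Eventually.of_forall fun t => by
      simpa [Real.norm_eq_abs] using hbp t)
  set p : ℝ := ∫ x, (v x * (starRingEnd ℂ) (v' x)).im with hpdef
  -- integrability and bound for the quartic density
  have hbq : ∀ x, ‖(((‖v x‖ ^ 2 : ℝ) : ℂ) * (starRingEnd ℂ) (v x) * v' x).im‖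
      ≤ S * (‖v x‖ ^ 2 + ‖v' x‖ ^ 2) := by
    intro x
    have h1 : |(((‖v x‖ ^ 2 : ℝ) : ℂ) * (starRingEnd ℂ) (v x) * v' x).im|
        ≤ ‖v x‖ ^ 2 * (‖v x‖ * ‖v' x‖) := by
      calc |(((‖v x‖ ^ 2 : ℝ) : ℂ) * (starRingEnd ℂ) (v x) * v' x).im|
          ≤ ‖(((‖v x‖ ^ 2 : ℝ) : ℂ) * (starRingEnd ℂ) (v x) * v' x)‖ := Complex.abs_im_le_norm _
        _ = ‖v x‖ ^ 2 * (‖v x‖ * ‖v' x‖) := by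
            rw [norm_mul, norm_mul, RCLike.norm_conj, Complex.norm_real, Real.norm_eq_abs,
              abs_of_nonneg (by positivity : (0:ℝ) ≤ ‖v x‖ ^ 2), mul_assoc]
    have h2 : ‖v x‖ * ‖v' x‖ ≤ ‖v x‖ ^ 2 + ‖v' x‖ ^ 2 := by
      nlinarith [sq_nonneg (‖v x‖ - ‖v' x‖), norm_nonneg (v x), norm_nonneg (v' x)]
    have h3 : ‖v x‖ ^ 2 * (‖v x‖ * ‖v' x‖) ≤ S * (‖v x‖ ^ 2 + ‖v' x‖ ^ 2) := by
      have := hSob x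
      nlinarith [mul_nonneg (norm_nonneg (v x)) (norm_nonneg (v' x)), sq_nonneg ‖v x‖]
    rw [Real.norm_eq_abs]
    exact h1.trans h3
  have hmes_q : AEStronglyMeasurable
      (fun x => (((‖v x‖ ^ 2 : ℝ) : ℂ) * (starRingEnd ℂ) (v x) * v' x).im) volume := by
    refine Complex.continuous_im.comp_aestronglyMeasurable ?_
    exact ((Complex.continuous_ofReal.comp (hcv.norm.pow 2)).aestronglyMeasurable.mul
      (Complex.continuous_conj.comp hcv).aestronglyMeasurable).mul hm'
  have hIq : Integrable (fun x => (((‖v x‖ ^ 2 : ℝ) : ℂ) * (starRingEnd ℂ) (v x) * v' x).im) :=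
    ((hI2.add hI2').const_mul S).mono' hmes_q (Filter.Eventually.of_forall hbq)
  set q : ℝ := ∫ x, (((‖v x‖ ^ 2 : ℝ) : ℂ) * (starRingEnd ℂ) (v x) * v' x).im with hqdef
  have hqbound : |q| ≤ S * S := by
    calc |q| ≤ ∫ x, |(((‖v x‖ ^ 2 : ℝ) : ℂ) * (starRingEnd ℂ) (v x) * v' x).im| := by
          rw [hqdef, ← Real.norm_eq_abs]
          exact (norm_integral_le_integral_norm _).trans (le_of_eq (by simp [Real.norm_eq_abs]))
      _ ≤ ∫ x, S * (‖v x‖ ^ 2 + ‖v' x‖ ^ 2) := by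
          refine integral_mono hIq.abs ((hI2.add hI2').const_mul S) fun x => ?_
          simpa [Real.norm_eq_abs] using hbq x
      _ = S * S := by
          rw [integral_const_mul, integral_add hI2 hI2', ← hm2, ← hn, ← hS]
  -- coercivity
  have hcoer : ε * S ≤ n + ω * m2 + c * p := by
    have hptwise : ∀ x, 0 ≤ ‖v' x‖ ^ 2 + ω * ‖v x‖ ^ 2
        + c * (v x * (starRingEnd ℂ) (v' x)).im - ε * (‖v x‖ ^ 2 + ‖v' x‖ ^ 2) := by
      intro x
      have h1 : -( |c| * ‖v x‖ * ‖v' x‖ ) ≤ c * (v x * (starRingEnd ℂ) (v' x)).im := by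
        have : |c * (v x * (starRingEnd ℂ) (v' x)).im| ≤ |c| * (‖v x‖ * ‖v' x‖) := by
          rw [abs_mul]
          refine mul_le_mul_of_nonneg_left ?_ (abs_nonneg c)
          calc |(v x * (starRingEnd ℂ) (v' x)).im| ≤ ‖v x * (starRingEnd ℂ) (v' x)‖ :=
                Complex.abs_im_le_norm _
            _ = ‖v x‖ * ‖v' x‖ := by rw [norm_mul, RCLike.norm_conj]
        have := (abs_le.mp this).1
        linarith [this, (by ring : -( |c| * (‖v x‖ * ‖v' x‖)) = -( |c| * ‖v x‖ * ‖v' x‖))]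
      have h2 := hq (‖v x‖) (‖v' x‖) (norm_nonneg _) (norm_nonneg _)
      linarith
    have hint : 0 ≤ ∫ x, (‖v' x‖ ^ 2 + ω * ‖v x‖ ^ 2
        + c * (v x * (starRingEnd ℂ) (v' x)).im - ε * (‖v x‖ ^ 2 + ‖v' x‖ ^ 2)) :=
      integral_nonneg hptwise
    have hIa : Integrable (fun x => ‖v' x‖ ^ 2 + ω * ‖v x‖ ^ 2
        + c * (v x * (starRingEnd ℂ) (v' x)).im) volume := by
      exact (hI2'.add (hI2.const_mul ω)).add (hIp.const_mul c)
    have hIb : Integrable (fun x => ε * (‖v x‖ ^ 2 + ‖v' x‖ ^ 2)) volume := by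
      exact (hI2.add hI2').const_mul ε
    have hIc : Integrable (fun x => ‖v' x‖ ^ 2 + ω * ‖v x‖ ^ 2) volume := by
      exact hI2'.add (hI2.const_mul ω)
    have hId : Integrable (fun x => c * (v x * (starRingEnd ℂ) (v' x)).im) volume := by
      exact hIp.const_mul c
    have hIe : Integrable (fun x => ω * ‖v x‖ ^ 2) volume := by
      exact hI2.const_mul ω
    have heq : ∫ x, (‖v' x‖ ^ 2 + ω * ‖v x‖ ^ 2
        + c * (v x * (starRingEnd ℂ) (v' x)).im - ε * (‖v x‖ ^ 2 + ‖v' x‖ ^ 2))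
        = n + ω * m2 + c * p - ε * (m2 + n) := by
      rw [integral_sub hIa hIb, integral_add hIc hId, integral_add hI2' hIe,
        integral_const_mul, integral_const_mul, integral_const_mul,
        integral_add hI2 hI2']
    rw [heq] at hint
    rw [hS]
    linarith
  -- conclude
  have hIval : n + q + ω * m2 + c * p = 0 := hI0
  have h1 : n + ω * m2 + c * p ≤ S * S := by
    have : n + ω * m2 + c * p = -q := by linarith
    rw [this]
    calc -q ≤ |q| := neg_le_abs q
      _ ≤ S * S := hqbound
  have hεS : ε ≤ S := by nlinarith
  constructor
  · rw [hS] at hεS; exact hεS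
  · calc ε ^ 2 = ε * ε := sq ε
      _ ≤ ε * S := by nlinarith
      _ ≤ n + ω * m2 + c * p := hcoer

-- Gaussian building blocks
noncomputable def phi : ℝ → ℝ := fun x => Real.exp (-x ^ 2)
noncomputable def phi' : ℝ → ℝ := fun x => Real.exp (-x ^ 2) * (-(2 * x))

lemma phi_hasDeriv (x : ℝ) : HasDerivAt phi (phi' x) x := by
  have h1 : HasDerivAt (fun x : ℝ => -x ^ 2) (-(2 * x)) x := by
    simpa using (hasDerivAt_pow 2 x).fun_neg
  show HasDerivAt (fun x => Real.exp (-x ^ 2)) (Real.exp (-x ^ 2) * (-(2 * x))) x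
  exact h1.exp

lemma phi_pos (x : ℝ) : 0 < phi x := Real.exp_pos _

lemma hB_int : Integrable (fun x : ℝ => phi x ^ 2) := by
  have : (fun x : ℝ => phi x ^ 2) = fun x : ℝ => Real.exp (-2 * x ^ 2) := by
    funext x
    rw [phi, pow_two, ← Real.exp_add]
    ring_nf
  rw [this]
  exact integrable_exp_neg_mul_sq (by norm_num)

lemma hC_int : Integrable (fun x : ℝ => phi x ^ 4) := by
  have : (fun x : ℝ => phi x ^ 4) = fun x : ℝ => Real.exp (-4 * x ^ 2) := by
    funext x
    rw [phi, ← Real.exp_nat_mul]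
    norm_num
  rw [this]
  exact integrable_exp_neg_mul_sq (by norm_num)

lemma hA_int : Integrable (fun x : ℝ => phi' x ^ 2) := by
  have h2 : Integrable (fun x : ℝ => x ^ (2:ℝ) * Real.exp (-2 * x ^ 2)) :=
    integrable_rpow_mul_exp_neg_mul_sq (by norm_num) (by norm_num)
  have h3 : Integrable (fun x : ℝ => x ^ 2 * Real.exp (-2 * x ^ 2)) := by
    have : (fun x : ℝ => x ^ (2:ℝ) * Real.exp (-2 * x ^ 2))
        = fun x : ℝ => x ^ 2 * Real.exp (-2 * x ^ 2) := by
      funext x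
      rw [show (2:ℝ) = ((2:ℕ):ℝ) by norm_num, Real.rpow_natCast]
    rwa [this] at h2
  have h4 := h3.const_mul 4
  have : (fun x : ℝ => 4 * (x ^ 2 * Real.exp (-2 * x ^ 2))) = fun x : ℝ => phi' x ^ 2 := by
    funext x
    rw [phi', mul_pow, pow_two (Real.exp _), ← Real.exp_add]
    ring_nf
  rwa [this] at h4

lemma hB_pos : 0 < ∫ x : ℝ, phi x ^ 2 := by
  have h : (fun x : ℝ => phi x ^ 2) = fun x : ℝ => Real.exp (-2 * x ^ 2) := by
    funext x; rw [phi, pow_two, ← Real.exp_add]; ring_nf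
  rw [h, integral_gaussian]
  exact Real.sqrt_pos.mpr (by positivity)

lemma hC_pos : 0 < ∫ x : ℝ, phi x ^ 4 := by
  have h : (fun x : ℝ => phi x ^ 4) = fun x : ℝ => Real.exp (-4 * x ^ 2) := by
    funext x; rw [phi, ← Real.exp_nat_mul]; norm_num
  rw [h, integral_gaussian]
  exact Real.sqrt_pos.mpr (by positivity)

/-- Existence of an element of the Nehari manifold. -/
lemma nehari_nonempty (ω c : ℝ) (hωc : c ^ 2 < 4 * ω) :
    ∃ v v' : ℝ → ℂ, H1pair v v' ∧ v ≠ 0 ∧ Ifun ω c v v' = 0 := by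
  have hω : 0 < ω := by nlinarith [sq_nonneg c]
  set T : ℝ := |c| + 1 with hT
  have hTpos : 0 < T := by positivity
  set A : ℝ := ∫ x, phi' x ^ 2 with hA
  set B : ℝ := ∫ x, phi x ^ 2 with hBd
  set C : ℝ := ∫ x, phi x ^ 4 with hCd
  have hA0 : 0 ≤ A := integral_nonneg fun x => sq_nonneg _
  have hB0 : 0 < B := hB_pos
  have hC0 : 0 < C := hC_pos
  set R : ℝ := A + T ^ 2 * B + ω * B + c * (T * B) with hR
  have hR0 : 0 < R := by
    have h1 : -|c| ≤ c := neg_abs_le c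
    have h2 : T ^ 2 * B + c * (T * B) ≥ T * B := by nlinarith [mul_pos hTpos hB0, abs_nonneg c]
    nlinarith [mul_pos hTpos hB0, mul_pos hω hB0]
  set lam : ℝ := Real.sqrt (R / (T * C)) with hlam
  have hlam2 : lam ^ 2 = R / (T * C) :=
    Real.sq_sqrt (div_nonneg hR0.le (mul_pos hTpos hC0).le)
  have hlampos : 0 < lam := Real.sqrt_pos.mpr (div_pos hR0 (mul_pos hTpos hC0))
  set c₀ : ℂ := -(T : ℂ) * Complex.I with hc₀
  set e : ℝ → ℂ := fun x => Complex.exp (c₀ * x) with he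
  set s : ℝ → ℂ := fun x => ((lam * phi' x : ℝ) : ℂ) + ((lam * phi x : ℝ) : ℂ) * c₀ with hs
  set v : ℝ → ℂ := fun x => ((lam * phi x : ℝ) : ℂ) * e x with hv
  set v' : ℝ → ℂ := fun x => s x * e x with hv'
  -- basic facts about e
  have hee : ∀ x : ℝ, e x * (starRingEnd ℂ) (e x) = 1 := by
    intro x
    have hconj : (starRingEnd ℂ) (e x) = Complex.exp (-(c₀ * x)) := by
      rw [he, ← Complex.exp_conj]
      congr 1
      rw [hc₀]
      simp [map_mul, Complex.conj_I, Complex.conj_ofReal]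
    rw [hconj, he, ← Complex.exp_add]
    simp
  have hnorme : ∀ x : ℝ, ‖e x‖ = 1 := by
    intro x
    have hx : c₀ * (x : ℂ) = ((-(T * x) : ℝ) : ℂ) * Complex.I := by
      rw [hc₀]; push_cast; ring
    show ‖Complex.exp (c₀ * (x : ℂ))‖ = 1
    rw [hx, Complex.norm_exp_ofReal_mul_I]
  -- derivative
  have hder : ∀ x, HasDerivAt v (v' x) x := by
    intro x
    have h1 : HasDerivAt (fun x : ℝ => ((lam * phi x : ℝ) : ℂ)) ((lam * phi' x : ℝ) : ℂ) x :=
      HasDerivAt.ofReal_comp ((phi_hasDeriv x).const_mul lam)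
    have h2 : HasDerivAt (fun x : ℝ => c₀ * (x : ℂ)) c₀ x := by
      simpa using (Complex.ofRealCLM.hasDerivAt (x := x)).const_mul c₀
    have h3 := h2.cexp
    have h4 := h1.mul h3
    refine h4.congr_deriv ?_
    rw [hv', hs, he]
    push_cast
    ring
  have hcv : Continuous v := by
    rw [continuous_iff_continuousAt]; exact fun t => (hder t).continuousAt
  have hcϕ : Continuous phi := by
    rw [continuous_iff_continuousAt]; exact fun t => (phi_hasDeriv t).continuousAt
  have hcϕ' : Continuous phi' := by
    unfold phi'
    fun_prop
  have hcs : Continuous s := by rw [hs]; fun_prop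
  have hce : Continuous e := by rw [he]; fun_prop
  have hcv' : Continuous v' := by rw [hv']; exact hcs.mul hce
  -- pointwise identities
  have hnv : ∀ x, ‖v x‖ ^ 2 = lam ^ 2 * phi x ^ 2 := by
    intro x
    rw [hv]
    rw [norm_mul, hnorme, mul_one, Complex.norm_real, Real.norm_eq_abs,
      abs_of_pos (mul_pos hlampos (phi_pos x)), mul_pow]
  have hsim : ∀ x, (s x).im = -(lam * phi x * T) := by
    intro x
    rw [hs, hc₀]
    simp [Complex.add_im, Complex.mul_im]
  have hsre : ∀ x, (s x).re = lam * phi' x := by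
    intro x
    rw [hs, hc₀]
    simp [Complex.add_re, Complex.mul_re]
  have hns : ∀ x, ‖s x‖ ^ 2 = lam ^ 2 * (phi' x ^ 2 + T ^ 2 * phi x ^ 2) := by
    intro x
    rw [Complex.sq_norm, Complex.normSq_apply, hsre, hsim]
    ring
  have hnv' : ∀ x, ‖v' x‖ ^ 2 = lam ^ 2 * (phi' x ^ 2 + T ^ 2 * phi x ^ 2) := by
    intro x
    rw [hv', norm_mul, hnorme, mul_one, hns]
  have hmom : ∀ x, (v x * (starRingEnd ℂ) (v' x)).im = lam ^ 2 * T * phi x ^ 2 := by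
    intro x
    have h1 : v x * (starRingEnd ℂ) (v' x)
        = ((lam * phi x : ℝ) : ℂ) * (starRingEnd ℂ) (s x) := by
      rw [hv, hv', map_mul]
      calc ((lam * phi x : ℝ) : ℂ) * e x * ((starRingEnd ℂ) (s x) * (starRingEnd ℂ) (e x))
          = ((lam * phi x : ℝ) : ℂ) * (starRingEnd ℂ) (s x) * (e x * (starRingEnd ℂ) (e x)) := by
            ring
        _ = ((lam * phi x : ℝ) : ℂ) * (starRingEnd ℂ) (s x) := by rw [hee, mul_one]
    rw [h1]
    rw [Complex.mul_im, Complex.ofReal_re, Complex.ofReal_im, Complex.conj_im, Complex.conj_re,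
      hsim]
    ring
  have hquart : ∀ x, ((((‖v x‖ ^ 2 : ℝ) : ℂ)) * (starRingEnd ℂ) (v x) * v' x).im
      = -(lam ^ 4 * T * phi x ^ 4) := by
    intro x
    have h1 : (((‖v x‖ ^ 2 : ℝ) : ℂ)) * (starRingEnd ℂ) (v x) * v' x
        = (((‖v x‖ ^ 2 : ℝ) : ℂ)) * ((lam * phi x : ℝ) : ℂ) * s x := by
      rw [hv, hv', map_mul, Complex.conj_ofReal]
      calc ((‖v x‖ ^ 2 : ℝ) : ℂ) * (((lam * phi x : ℝ) : ℂ) * (starRingEnd ℂ) (e x)) * (s x * e x)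
          = ((‖v x‖ ^ 2 : ℝ) : ℂ) * ((lam * phi x : ℝ) : ℂ) * s x * (e x * (starRingEnd ℂ) (e x)) := by
            ring
        _ = ((‖v x‖ ^ 2 : ℝ) : ℂ) * ((lam * phi x : ℝ) : ℂ) * s x := by rw [hee, mul_one]
    rw [h1, hnv x]
    rw [show (((lam ^ 2 * phi x ^ 2 : ℝ) : ℂ)) * ((lam * phi x : ℝ) : ℂ)
      = (((lam ^ 2 * phi x ^ 2) * (lam * phi x) : ℝ) : ℂ) by push_cast; ring]
    rw [Complex.mul_im, Complex.ofReal_re, Complex.ofReal_im, hsim]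
    ring
  -- integrability
  have hIv2 : Integrable (fun x => ‖v x‖ ^ 2) := by
    have h : (fun x => ‖v x‖ ^ 2) = fun x => lam ^ 2 * phi x ^ 2 := funext hnv
    rw [h]; exact hB_int.const_mul _
  have hIv'2 : Integrable (fun x => ‖v' x‖ ^ 2) := by
    have h : (fun x => ‖v' x‖ ^ 2)
        = fun x => lam ^ 2 * phi' x ^ 2 + lam ^ 2 * T ^ 2 * phi x ^ 2 := by
      funext x; rw [hnv' x]; ring
    rw [h]; exact (hA_int.const_mul _).add (hB_int.const_mul _)
  -- the four integrals
  have em2 : (∫ x, ‖v x‖ ^ 2) = lam ^ 2 * B := by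
    simp_rw [hnv]
    rw [integral_const_mul, ← hBd]
  have en : (∫ x, ‖v' x‖ ^ 2) = lam ^ 2 * (A + T ^ 2 * B) := by
    simp_rw [hnv']
    rw [integral_const_mul, integral_add hA_int (hB_int.const_mul _), integral_const_mul,
      ← hA, ← hBd]
  have ep : (∫ x, (v x * (starRingEnd ℂ) (v' x)).im) = lam ^ 2 * T * B := by
    simp_rw [hmom]
    rw [integral_const_mul, ← hBd]
  have eq4 : (∫ x, ((((‖v x‖ ^ 2 : ℝ) : ℂ)) * (starRingEnd ℂ) (v x) * v' x).im)
      = -(lam ^ 4 * T * C) := by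
    simp_rw [hquart]
    rw [integral_neg, integral_const_mul, ← hCd]
  -- membership in H¹
  have hml2v : MemLp v 2 volume :=
    (memLp_two_iff_integrable_sq_norm hcv.aestronglyMeasurable).mpr hIv2
  have hml2v' : MemLp v' 2 volume :=
    (memLp_two_iff_integrable_sq_norm hcv'.aestronglyMeasurable).mpr hIv'2
  -- nonvanishing
  have hne0 : v ≠ 0 := by
    intro h0
    have h1 := congrFun h0 0
    rw [hv] at h1
    simp only [Pi.zero_apply] at h1
    have hphi0 : phi 0 = 1 := by simp [phi]
    have he0 : e 0 = 1 := by rw [he]; simp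
    rw [he0, hphi0, mul_one, mul_one, Complex.ofReal_eq_zero] at h1
    exact hlampos.ne' h1
  -- the Nehari constraint
  have hIfun : Ifun ω c v v' = 0 := by
    unfold Ifun
    rw [en, eq4, em2, ep]
    have hTC : T * C ≠ 0 := (mul_pos hTpos hC0).ne'
    have h4 : lam ^ 4 * T * C = lam ^ 2 * R := by
      rw [show lam ^ 4 = lam ^ 2 * lam ^ 2 by ring, hlam2]
      field_simp
    calc lam ^ 2 * (A + T ^ 2 * B) + -(lam ^ 4 * T * C) + ω * (lam ^ 2 * B)
          + c * (lam ^ 2 * T * B)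
        = lam ^ 2 * R - lam ^ 4 * T * C := by rw [hR]; ring
      _ = lam ^ 2 * R - lam ^ 2 * R := by rw [h4]
      _ = 0 := by ring
  exact ⟨v, v', ⟨hder, hml2v, hml2v'⟩, hne0, hIfun⟩

/-- uniform `H¹` lower bound on the Nehari manifold, and
positivity of the Nehari minimum `m_N`. -/
theorem stmt4 (ω c : ℝ) (hωc : c ^ 2 < 4 * ω) :
    ∃ δ > (0 : ℝ),
      (∀ v v' : ℝ → ℂ, H1pair v v' → v ≠ 0 → Ifun ω c v v' = 0 →
        (∫ x, ‖v x‖ ^ 2) + (∫ x, ‖v' x‖ ^ 2) > δ) ∧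
      0 < sInf {m : ℝ |
        ∃ v v' : ℝ → ℂ, H1pair v v' ∧ v ≠ 0 ∧ Ifun ω c v v' = 0 ∧ Sfun ω c v v' = m} := by
  obtain ⟨ε, hε, hq⟩ := quadform ω c hωc
  refine ⟨ε / 2, by linarith, fun v v' hp hne hI0 => ?_, ?_⟩
  · have := (keylem ω c ε hε hq v v' hp hne hI0).1
    linarith
  · have hbdd : ∀ m ∈ {m : ℝ |
        ∃ v v' : ℝ → ℂ, H1pair v v' ∧ v ≠ 0 ∧ Ifun ω c v v' = 0 ∧ Sfun ω c v v' = m},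
        ε ^ 2 / 4 ≤ m := by
      rintro m ⟨v, v', hp, hne, hI0, rfl⟩
      have hkey := (keylem ω c ε hε hq v v' hp hne hI0).2
      have hSval : Sfun ω c v v' = (1 / 4) * ((∫ x, ‖v' x‖ ^ 2)
          + ω * (∫ x, ‖v x‖ ^ 2) + c * (∫ x, (v x * (starRingEnd ℂ) (v' x)).im))
          + (1 / 4) * Ifun ω c v v' := by
        unfold Sfun Ifun
        ring
      rw [hSval, hI0]
      linarith
    obtain ⟨v, v', hp, hne, hI0⟩ := nehari_nonempty ω c hωc
    have hmem : Sfun ω c v v' ∈ {m : ℝ |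
        ∃ v v' : ℝ → ℂ, H1pair v v' ∧ v ≠ 0 ∧ Ifun ω c v v' = 0 ∧ Sfun ω c v v' = m} :=
      ⟨v, v', hp, hne, hI0, rfl⟩
    have hsinf : ε ^ 2 / 4 ≤ sInf {m : ℝ |
        ∃ v v' : ℝ → ℂ, H1pair v v' ∧ v ≠ 0 ∧ Ifun ω c v v' = 0 ∧ Sfun ω c v v' = m} :=
      le_csInf ⟨_, hmem⟩ hbdd
    have : 0 < ε ^ 2 / 4 := by positivity
    linarith
end

section
/- Let ω, c be real with c² < 4ω and let m_N = inf{S(v) : v ∈ H¹(ℝ;ℂ)∖{0}, I(v) = 0} be the minimum of the action over the Nehari manifold. Then m_N = (1/4)·inf{L(v) : v ∈ H¹(ℝ;ℂ)∖{0}, I(v) ≤ 0}, where L(v) = ‖v_x‖²_{L²} + ω‖v‖²_{L²} + c·Im∫_ℝ v·conj(v_x) dx. -/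
open MeasureTheory

/-- The quadratic functional `L(v) = ‖v_x‖² + ω‖v‖² + c·Im∫v·conj(v_x)`. -/
noncomputable def Lfun (ω c : ℝ) (v v' : ℝ → ℂ) : ℝ :=
  (∫ x, ‖v' x‖ ^ 2) + ω * (∫ x, ‖v x‖ ^ 2)
    + c * (∫ x, (v x * (starRingEnd ℂ) (v' x)).im)

lemma cross_integrable {v v' : ℝ → ℂ} (h : H1pair v v') :
    Integrable (fun x => (v x * (starRingEnd ℂ) (v' x)).im) volume := by
  obtain ⟨hd, hv, hv'⟩ := h
  have hg : Integrable (fun x => ‖v x‖ * ‖v' x‖) volume := by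
    have h1 : (1 : ENNReal) / 1 = 1 / 2 + 1 / 2 := by
      rw [ENNReal.div_add_div_same, ENNReal.div_self (by norm_num) (by norm_num)]
      norm_num
      rw [ENNReal.div_self (by norm_num) (by norm_num)]
    have := (MemLp.smul (p := 2) (q := 2) (r := 1) hv'.norm hv.norm)
    rw [memLp_one_iff_integrable] at this
    simpa [smul_eq_mul, Pi.mul_def] using this
  refine Integrable.mono' hg ?_ (Filter.Eventually.of_forall fun x => ?_)
  · exact Complex.continuous_im.comp_aestronglyMeasurable
      (hv.1.mul (Complex.continuous_conj.comp_aestronglyMeasurable hv'.1))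
  · calc ‖(v x * (starRingEnd ℂ) (v' x)).im‖
        ≤ ‖v x * (starRingEnd ℂ) (v' x)‖ := by
          simpa using Complex.abs_im_le_norm (v x * (starRingEnd ℂ) (v' x))
      _ = ‖v x‖ * ‖v' x‖ := by simp

lemma L2_pos {v v' : ℝ → ℂ} (h : H1pair v v') (hne : v ≠ 0) :
    0 < ∫ x, ‖v x‖ ^ 2 := by
  obtain ⟨hd, hv, hv'⟩ := h
  have hint : Integrable (fun x => ‖v x‖ ^ 2) volume := hv.norm.integrable_sq
  have hnn : 0 ≤ ∫ x, ‖v x‖ ^ 2 := integral_nonneg fun x => by positivity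
  rcases hnn.lt_or_eq with h0 | h0
  · exact h0
  exfalso
  have hcont : Continuous v := continuous_iff_continuousAt.2 fun x => (hd x).continuousAt
  have hz : (fun x => ‖v x‖ ^ 2) =ᵐ[volume] 0 := by
    rw [← integral_eq_zero_iff_of_nonneg (fun x => by positivity) hint]
    exact h0.symm
  have hz0 : volume {x : ℝ | ‖v x‖ ^ 2 ≠ 0} = 0 := by
    have := hz
    rw [Filter.EventuallyEq, ae_iff] at this
    simpa using this
  have hUopen : IsOpen {x : ℝ | v x ≠ 0} :=
    isOpen_compl_iff.2 (isClosed_singleton.preimage hcont)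
  have hUne : {x : ℝ | v x ≠ 0}.Nonempty := by
    rcases Function.ne_iff.1 hne with ⟨x, hx⟩
    exact ⟨x, by simpa using hx⟩
  have hpos := hUopen.measure_pos volume hUne
  have hnull : volume {x : ℝ | v x ≠ 0} = 0 := by
    refine measure_mono_null (fun x hx => ?_) hz0
    simp only [Set.mem_setOf_eq] at hx ⊢
    exact pow_ne_zero 2 (norm_ne_zero_iff.2 hx)
  exact absurd hnull hpos.ne'

lemma Lfun_ge {ω c : ℝ} {v v' : ℝ → ℂ} (h : H1pair v v') :
    (ω - c ^ 2 / 4) * ∫ x, ‖v x‖ ^ 2 ≤ Lfun ω c v v' := by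
  obtain ⟨hd, hv, hv'⟩ := h
  have h1 : Integrable (fun x => ‖v' x‖ ^ 2) volume := hv'.norm.integrable_sq
  have h2 : Integrable (fun x => ω * ‖v x‖ ^ 2) volume := (hv.norm.integrable_sq).const_mul ω
  have h3 : Integrable (fun x => c * (v x * (starRingEnd ℂ) (v' x)).im) volume :=
    (cross_integrable ⟨hd, hv, hv'⟩).const_mul c
  have h12 : Integrable (fun x => ‖v' x‖ ^ 2 + ω * ‖v x‖ ^ 2) volume := h1.add h2
  have h123 : Integrable
      (fun x => ‖v' x‖ ^ 2 + ω * ‖v x‖ ^ 2 + c * (v x * (starRingEnd ℂ) (v' x)).im) volume :=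
    h12.add h3
  have hL : Lfun ω c v v'
      = ∫ x, (‖v' x‖ ^ 2 + ω * ‖v x‖ ^ 2 + c * (v x * (starRingEnd ℂ) (v' x)).im) := by
    rw [integral_add h12 h3, integral_add h1 h2, integral_const_mul, integral_const_mul]
    rfl
  rw [hL, ← integral_const_mul]
  refine integral_mono ((hv.norm.integrable_sq).const_mul _) h123 fun x => ?_
  have him : |(v x * (starRingEnd ℂ) (v' x)).im| ≤ ‖v x‖ * ‖v' x‖ := by
    calc |(v x * (starRingEnd ℂ) (v' x)).im| ≤ ‖v x * (starRingEnd ℂ) (v' x)‖ := by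
          simpa using Complex.abs_im_le_norm (v x * (starRingEnd ℂ) (v' x))
      _ = ‖v x‖ * ‖v' x‖ := by simp
  have hc1 : -(|c| * (‖v x‖ * ‖v' x‖)) ≤ c * (v x * (starRingEnd ℂ) (v' x)).im := by
    have habs : |c * (v x * (starRingEnd ℂ) (v' x)).im| ≤ |c| * (‖v x‖ * ‖v' x‖) := by
      rw [abs_mul]
      exact mul_le_mul_of_nonneg_left him (abs_nonneg c)
    have := neg_abs_le (c * (v x * (starRingEnd ℂ) (v' x)).im)
    linarith
  have hsq : 0 ≤ (‖v' x‖ - |c| * ‖v x‖ / 2) ^ 2 := sq_nonneg _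
  have hcc : |c| ^ 2 = c ^ 2 := sq_abs c
  simp only []
  nlinarith [norm_nonneg (v x), norm_nonneg (v' x), abs_nonneg c]

noncomputable def Nfun (v v' : ℝ → ℂ) : ℝ :=
  ∫ x, (((‖v x‖ ^ 2 : ℝ) : ℂ) * (starRingEnd ℂ) (v x) * v' x).im

lemma Sfun_eq (ω c : ℝ) (v v' : ℝ → ℂ) :
    Sfun ω c v v' = (1 / 4) * Ifun ω c v v' + (1 / 4) * Lfun ω c v v' := by
  unfold Sfun Ifun Lfun; ring

lemma Ifun_eq (ω c : ℝ) (v v' : ℝ → ℂ) :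
    Ifun ω c v v' = Lfun ω c v v' + Nfun v v' := by
  unfold Ifun Lfun Nfun; ring

lemma ofReal_mul_im' (r : ℝ) (z : ℂ) : ((r : ℂ) * z).im = r * z.im := by
  simp [Complex.mul_im]

lemma int_sq_scale (t : ℝ) (f : ℝ → ℂ) :
    ∫ x, ‖(t : ℂ) * f x‖ ^ 2 = t ^ 2 * ∫ x, ‖f x‖ ^ 2 := by
  have : ∀ x, ‖(t : ℂ) * f x‖ ^ 2 = t ^ 2 * ‖f x‖ ^ 2 := by
    intro x
    rw [norm_mul, mul_pow, Complex.norm_real, Real.norm_eq_abs, sq_abs]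
  simp_rw [this]
  exact integral_const_mul _ _

lemma int_cross_scale (t : ℝ) (v v' : ℝ → ℂ) :
    ∫ x, (((t : ℂ) * v x) * (starRingEnd ℂ) ((t : ℂ) * v' x)).im
      = t ^ 2 * ∫ x, (v x * (starRingEnd ℂ) (v' x)).im := by
  have : ∀ x, (((t : ℂ) * v x) * (starRingEnd ℂ) ((t : ℂ) * v' x)).im
      = t ^ 2 * (v x * (starRingEnd ℂ) (v' x)).im := by
    intro x
    have : ((t : ℂ) * v x) * (starRingEnd ℂ) ((t : ℂ) * v' x)
        = ((t ^ 2 : ℝ) : ℂ) * (v x * (starRingEnd ℂ) (v' x)) := by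
      rw [map_mul, Complex.conj_ofReal]
      push_cast
      ring
    rw [this, ofReal_mul_im']
  simp_rw [this]
  exact integral_const_mul _ _

lemma int_quartic_scale (t : ℝ) (v v' : ℝ → ℂ) :
    ∫ x, (((‖(t : ℂ) * v x‖ ^ 2 : ℝ) : ℂ) * (starRingEnd ℂ) ((t : ℂ) * v x)
        * ((t : ℂ) * v' x)).im
      = t ^ 4 * ∫ x, (((‖v x‖ ^ 2 : ℝ) : ℂ) * (starRingEnd ℂ) (v x) * v' x).im := by
  have : ∀ x, (((‖(t : ℂ) * v x‖ ^ 2 : ℝ) : ℂ) * (starRingEnd ℂ) ((t : ℂ) * v x)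
        * ((t : ℂ) * v' x)).im
      = t ^ 4 * ((((‖v x‖ ^ 2 : ℝ) : ℂ) * (starRingEnd ℂ) (v x) * v' x)).im := by
    intro x
    have h1 : ‖(t : ℂ) * v x‖ ^ 2 = t ^ 2 * ‖v x‖ ^ 2 := by
      rw [norm_mul, mul_pow, Complex.norm_real, Real.norm_eq_abs, sq_abs]
    have h2 : ((‖(t : ℂ) * v x‖ ^ 2 : ℝ) : ℂ) * (starRingEnd ℂ) ((t : ℂ) * v x)
        * ((t : ℂ) * v' x)
        = ((t ^ 4 : ℝ) : ℂ) * ((((‖v x‖ ^ 2 : ℝ) : ℂ) * (starRingEnd ℂ) (v x) * v' x)) := by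
      rw [h1, map_mul, Complex.conj_ofReal]
      push_cast
      ring
    rw [h2, ofReal_mul_im']
  simp_rw [this]
  exact integral_const_mul _ _

lemma H1pair_scale (t : ℝ) {v v' : ℝ → ℂ} (h : H1pair v v') :
    H1pair (fun x => (t : ℂ) * v x) (fun x => (t : ℂ) * v' x) :=
  ⟨fun x => (h.1 x).const_mul ((t : ℂ)), h.2.1.const_mul _, h.2.2.const_mul _⟩

lemma Lfun_scale (ω c t : ℝ) (v v' : ℝ → ℂ) :
    Lfun ω c (fun x => (t : ℂ) * v x) (fun x => (t : ℂ) * v' x) = t ^ 2 * Lfun ω c v v' := by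
  unfold Lfun
  rw [int_sq_scale, int_sq_scale, int_cross_scale]
  ring

lemma Ifun_scale (ω c t : ℝ) (v v' : ℝ → ℂ) :
    Ifun ω c (fun x => (t : ℂ) * v x) (fun x => (t : ℂ) * v' x)
      = t ^ 2 * Lfun ω c v v' + t ^ 4 * Nfun v v' := by
  rw [Ifun_eq, Lfun_scale]
  congr 1
  unfold Nfun
  exact int_quartic_scale t v v'

lemma Lfun_pos {ω c : ℝ} (hωc : c ^ 2 < 4 * ω) {v v' : ℝ → ℂ} (h : H1pair v v')
    (hne : v ≠ 0) : 0 < Lfun ω c v v' := by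
  have h1 := Lfun_ge (ω := ω) (c := c) h
  have h2 := L2_pos h hne
  nlinarith

lemma key {ω c : ℝ} (hωc : c ^ 2 < 4 * ω) {v v' : ℝ → ℂ} (h : H1pair v v')
    (hne : v ≠ 0) (hI : Ifun ω c v v' ≤ 0) :
    ∃ w w' : ℝ → ℂ, H1pair w w' ∧ w ≠ 0 ∧ Ifun ω c w w' = 0
      ∧ Sfun ω c w w' ≤ (1 / 4) * Lfun ω c v v' := by
  have hL : 0 < Lfun ω c v v' := Lfun_pos hωc h hne
  have hN : Nfun v v' ≤ -Lfun ω c v v' := by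
    rw [Ifun_eq] at hI; linarith
  set M : ℝ := -Nfun v v' with hM
  have hM0 : 0 < M := by simp only [hM]; linarith
  have hLM : Lfun ω c v v' ≤ M := by simp only [hM]; linarith
  set t : ℝ := Real.sqrt (Lfun ω c v v' / M) with ht
  have ht2 : t ^ 2 = Lfun ω c v v' / M := Real.sq_sqrt (div_nonneg hL.le hM0.le)
  have htpos : 0 < t := Real.sqrt_pos.2 (div_pos hL hM0)
  have ht4 : t ^ 4 = (Lfun ω c v v' / M) ^ 2 := by
    have h44 : t ^ 4 = (t ^ 2) ^ 2 := by ring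
    rw [h44, ht2]
  have hNM : Nfun v v' = -M := by simp [hM]
  have hI0 : Ifun ω c (fun x => (t : ℂ) * v x) (fun x => (t : ℂ) * v' x) = 0 := by
    rw [Ifun_scale, ht2, ht4, hNM]
    field_simp
    ring
  refine ⟨fun x => (t : ℂ) * v x, fun x => (t : ℂ) * v' x, H1pair_scale t h, ?_, hI0, ?_⟩
  · intro h0
    apply hne
    funext x
    have hx := congrFun h0 x
    simp only [Pi.zero_apply] at hx ⊢
    have htne : (t : ℂ) ≠ 0 := by
      simp only [ne_eq, Complex.ofReal_eq_zero]
      exact htpos.ne'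
    exact (mul_eq_zero.1 hx).resolve_left htne
  · rw [Sfun_eq, hI0, Lfun_scale, ht2]
    have ht21 : Lfun ω c v v' / M ≤ 1 := (div_le_one hM0).2 hLM
    nlinarith

/-- `m_N = (1/4)·inf{L(v) : v ≠ 0, I(v) ≤ 0}`. -/
theorem stmt5 (ω c : ℝ) (hωc : c ^ 2 < 4 * ω) :
    sInf {m : ℝ |
        ∃ v v' : ℝ → ℂ, H1pair v v' ∧ v ≠ 0 ∧ Ifun ω c v v' = 0 ∧ Sfun ω c v v' = m}
      = (1 / 4) * sInf {m : ℝ |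
        ∃ v v' : ℝ → ℂ, H1pair v v' ∧ v ≠ 0 ∧ Ifun ω c v v' ≤ 0 ∧ Lfun ω c v v' = m} := by
  set A := {m : ℝ |
      ∃ v v' : ℝ → ℂ, H1pair v v' ∧ v ≠ 0 ∧ Ifun ω c v v' = 0 ∧ Sfun ω c v v' = m} with hA
  set B := {m : ℝ |
      ∃ v v' : ℝ → ℂ, H1pair v v' ∧ v ≠ 0 ∧ Ifun ω c v v' ≤ 0 ∧ Lfun ω c v v' = m} with hB
  have hAB : ∀ a ∈ A, 4 * a ∈ B := by
    rintro a ⟨v, v', h, hne, hI0, hS⟩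
    refine ⟨v, v', h, hne, le_of_eq hI0, ?_⟩
    have := Sfun_eq ω c v v'
    rw [hI0] at this
    linarith
  have hBA : ∀ b ∈ B, ∃ a ∈ A, a ≤ (1 / 4) * b := by
    rintro b ⟨v, v', h, hne, hI, hLb⟩
    obtain ⟨w, w', hw, hwne, hwI, hwS⟩ := key hωc h hne hI
    exact ⟨Sfun ω c w w', ⟨w, w', hw, hwne, hwI, rfl⟩, by rw [← hLb]; exact hwS⟩
  have hB0 : ∀ b ∈ B, 0 ≤ b := by
    rintro b ⟨v, v', h, hne, hI, hLb⟩
    rw [← hLb]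
    exact (Lfun_pos hωc h hne).le
  have hA0 : ∀ a ∈ A, 0 ≤ a := by
    intro a ha
    have := hB0 _ (hAB a ha)
    linarith
  by_cases hBne : B.Nonempty
  · obtain ⟨b0, hb0⟩ := hBne
    have hAne : A.Nonempty := by
      obtain ⟨a, ha, _⟩ := hBA b0 hb0
      exact ⟨a, ha⟩
    have hAbdd : BddBelow A := ⟨0, hA0⟩
    have hBbdd : BddBelow B := ⟨0, hB0⟩
    apply le_antisymm
    · have h4 : 4 * sInf A ≤ sInf B := by
        refine le_csInf ⟨b0, hb0⟩ fun b hb => ?_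
        obtain ⟨a, ha, hab⟩ := hBA b hb
        have := csInf_le hAbdd ha
        linarith
      linarith
    · refine le_csInf hAne fun a ha => ?_
      have := csInf_le hBbdd (hAB a ha)
      linarith
  · have hBe : B = ∅ := Set.not_nonempty_iff_eq_empty.1 hBne
    have hAe : A = ∅ := by
      rw [Set.eq_empty_iff_forall_notMem]
      intro a ha
      exact absurd (hAB a ha) (by rw [hBe]; exact Set.notMem_empty _)
    rw [hAe, hBe, Real.sInf_empty]
    norm_num
end

section
/- Let φ : ℝ → ℝ and v : ℝ → ℝ be H²(ℝ) solutions of the linear ODE L₋u = 0, where L₋ = -∂_xx + a + (c/2)φ² - (3/16)φ⁴ + (φφ_x)/2 - (φ²/2)∂_x for constants a > 0, c ∈ ℝ. Then the Wronskian W = φ_x v - φ v_x satisfies W' = -(φ²/2)W, hence W(x) = W(0)·exp(-(1/2)∫₀ˣ φ²(y)dy). If moreover φ, φ_x, v, v_x all tend to 0 as x → ±∞, then W ≡ 0, and consequently v is a scalar multiple of φ (assuming φ ≢ 0). -/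
open Filter

private lemma bdd_of_tendsto_zero {f : ℝ → ℝ} (hc : Continuous f)
    (h1 : Filter.Tendsto f Filter.atTop (nhds 0))
    (h2 : Filter.Tendsto f Filter.atBot (nhds 0)) :
    ∃ M : ℝ, 0 ≤ M ∧ ∀ x, |f x| ≤ M := by
  have e1 : ∀ᶠ x in Filter.atTop, |f x| < 1 := by
    have := h1.eventually (Metric.ball_mem_nhds (0:ℝ) one_pos)
    simpa [Real.dist_eq] using this
  have e2 : ∀ᶠ x in Filter.atBot, |f x| < 1 := by
    have := h2.eventually (Metric.ball_mem_nhds (0:ℝ) one_pos)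
    simpa [Real.dist_eq] using this
  obtain ⟨B, hB⟩ := eventually_atTop.1 e1
  obtain ⟨A, hA⟩ := eventually_atBot.1 e2
  obtain ⟨Cb, hCb⟩ := (isCompact_Icc (a := A) (b := B)).exists_bound_of_continuousOn
    hc.continuousOn
  refine ⟨max Cb 1, le_trans zero_le_one (le_max_right _ _), fun x => ?_⟩
  rcases le_or_gt x A with hx | hx
  · exact le_trans (hA x hx).le (le_max_right _ _)
  rcases le_or_gt B x with hx' | hx'
  · exact le_trans (hB x hx').le (le_max_right _ _)
  · exact le_trans (by simpa using hCb x ⟨hx.le, hx'.le⟩) (le_max_left _ _)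


set_option maxHeartbeats 2000000 in
/-- Wronskian argument for the linearized operator `L₋`.
If `φ, v` solve `L₋u = -u'' + a u + (c/2)φ²u - (3/16)φ⁴u + (φφ_x/2)u - (φ²/2)u_x = 0`
and decay with their derivatives at `±∞`, then `W = φ_x v - φ v_x` verifies
`W' = -(φ²/2)W`, `W(x) = W(0)·exp(-(1/2)∫₀ˣ φ²)`, `W ≡ 0`, and `v` is a multiple
of `φ` provided `φ ≢ 0`. -/
theorem stmt6 (a c : ℝ) (ha : 0 < a)
    (φ φ' φ'' v v' v'' : ℝ → ℝ)
    (hφ1 : ∀ x, HasDerivAt φ (φ' x) x) (hφ2 : ∀ x, HasDerivAt φ' (φ'' x) x)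
    (hv1 : ∀ x, HasDerivAt v (v' x) x) (hv2 : ∀ x, HasDerivAt v' (v'' x) x)
    (heqφ : ∀ x, -φ'' x + a * φ x + (c / 2) * (φ x) ^ 2 * φ x
        - (3 / 16) * (φ x) ^ 4 * φ x + ((φ x * φ' x) / 2) * φ x
        - ((φ x) ^ 2 / 2) * φ' x = 0)
    (heqv : ∀ x, -v'' x + a * v x + (c / 2) * (φ x) ^ 2 * v x
        - (3 / 16) * (φ x) ^ 4 * v x + ((φ x * φ' x) / 2) * v x
        - ((φ x) ^ 2 / 2) * v' x = 0)
    (hφ0 : Filter.Tendsto φ Filter.atTop (nhds 0))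
    (hφ0' : Filter.Tendsto φ Filter.atBot (nhds 0))
    (hφ'0 : Filter.Tendsto φ' Filter.atTop (nhds 0))
    (hφ'0' : Filter.Tendsto φ' Filter.atBot (nhds 0))
    (hv0 : Filter.Tendsto v Filter.atTop (nhds 0))
    (hv0' : Filter.Tendsto v Filter.atBot (nhds 0))
    (hv'0 : Filter.Tendsto v' Filter.atTop (nhds 0))
    (hv'0' : Filter.Tendsto v' Filter.atBot (nhds 0)) :
    (∀ x, HasDerivAt (fun x => φ' x * v x - φ x * v' x)
        (-((φ x) ^ 2 / 2) * (φ' x * v x - φ x * v' x)) x) ∧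
    (∀ x, φ' x * v x - φ x * v' x
        = (φ' 0 * v 0 - φ 0 * v' 0)
            * Real.exp (-(1 / 2) * ∫ y in (0:ℝ)..x, (φ y) ^ 2)) ∧
    (∀ x, φ' x * v x - φ x * v' x = 0) ∧
    (φ ≠ 0 → ∃ k : ℝ, v = fun x => k * φ x) := by
  have hφc : Continuous φ := continuous_iff_continuousAt.2 fun x => (hφ1 x).continuousAt
  have hφ'c : Continuous φ' := continuous_iff_continuousAt.2 fun x => (hφ2 x).continuousAt
  -- Part 1
  have h1 : ∀ x, HasDerivAt (fun x => φ' x * v x - φ x * v' x)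
      (-((φ x) ^ 2 / 2) * (φ' x * v x - φ x * v' x)) x := by
    intro x
    have h := ((hφ2 x).mul (hv1 x)).sub ((hφ1 x).mul (hv2 x))
    convert h using 1
    · rfl
    · rfl
    · rfl
    linear_combination (v x) * heqφ x - (φ x) * heqv x
  -- FTC
  set I : ℝ → ℝ := fun x => ∫ y in (0:ℝ)..x, (φ y) ^ 2 with hIdef
  have hI : ∀ x, HasDerivAt I ((φ x) ^ 2) x := fun x =>
    ((hφc.pow 2).integral_hasStrictDerivAt 0 x).hasDerivAt
  -- Part 2
  have hG : ∀ x, HasDerivAt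
      (fun x => (φ' x * v x - φ x * v' x) * Real.exp ((1/2) * I x)) 0 x := by
    intro x
    have h := (h1 x).mul (((hI x).const_mul (1/2 : ℝ)).exp)
    exact h.congr_deriv (by ring)
  have hGconst : ∀ x, (φ' x * v x - φ x * v' x) * Real.exp ((1/2) * I x)
      = (φ' 0 * v 0 - φ 0 * v' 0) * Real.exp ((1/2) * I 0) :=
    fun x => is_const_of_deriv_eq_zero (fun y => (hG y).differentiableAt)
      (fun y => (hG y).deriv) x 0
  have hI0 : I 0 = 0 := intervalIntegral.integral_same
  have h2 : ∀ x, φ' x * v x - φ x * v' x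
      = (φ' 0 * v 0 - φ 0 * v' 0) * Real.exp (-(1 / 2) * I x) := by
    intro x
    have h0 : (φ' x * v x - φ x * v' x) * Real.exp ((1/2) * I x)
        = (φ' 0 * v 0 - φ 0 * v' 0) := by
      rw [hGconst x, hI0]; simp
    rw [← h0, mul_assoc, ← Real.exp_add]
    ring_nf
    simp
  -- Part 3
  have hWbot : Tendsto (fun x => φ' x * v x - φ x * v' x) atBot (nhds 0) := by
    have := (hφ'0'.mul hv0').sub (hφ0'.mul hv'0')
    simpa using this
  have hW0 : φ' 0 * v 0 - φ 0 * v' 0 = 0 := by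
    have hxle : ∀ x ≤ (0:ℝ), |φ' 0 * v 0 - φ 0 * v' 0| ≤ |φ' x * v x - φ x * v' x| := by
      intro x hx
      rw [h2 x, abs_mul, Real.abs_exp]
      have hIle : I x ≤ 0 := by
        rw [hIdef]
        simp only
        rw [← neg_nonneg, ← intervalIntegral.integral_symm]
        exact intervalIntegral.integral_nonneg hx (fun u _ => sq_nonneg _)
      have h1e : (1:ℝ) ≤ Real.exp (-(1 / 2) * I x) :=
        Real.one_le_exp (by nlinarith)
      nlinarith [abs_nonneg (φ' 0 * v 0 - φ 0 * v' 0)]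
    have habs : |φ' 0 * v 0 - φ 0 * v' 0| ≤ 0 := by
      have ht : Tendsto (fun x => |φ' x * v x - φ x * v' x|) atBot (nhds 0) := by
        simpa using hWbot.abs
      exact ge_of_tendsto ht (eventually_atBot.2 ⟨0, hxle⟩)
    simpa using le_antisymm habs (abs_nonneg _)
  have h3 : ∀ x, φ' x * v x - φ x * v' x = 0 := by
    intro x; rw [h2 x, hW0, zero_mul]
  refine ⟨h1, h2, h3, ?_⟩
  intro hφne
  obtain ⟨x₀, hx₀⟩ : ∃ x, φ x ≠ 0 := by
    by_contra h
    push_neg at h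
    exact hφne (funext fun x => h x)
  set k : ℝ := v x₀ / φ x₀ with hk
  -- bounds on coefficients
  have tQ : ∀ (l : Filter ℝ), Tendsto φ l (nhds 0) → Tendsto φ' l (nhds 0) →
      Tendsto (fun x => (c/2) * φ x ^ 2 - (3/16) * φ x ^ 4 + (φ x * φ' x) / 2) l (nhds 0) := by
    intro l h h'
    have := (((h.pow 2).const_mul (c/2)).sub ((h.pow 4).const_mul ((3:ℝ)/16))).add
      ((h.mul h').div_const 2)
    simpa using this
  obtain ⟨MQ, hMQ0, hMQ⟩ := bdd_of_tendsto_zero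
    (f := fun x => (c/2) * φ x ^ 2 - (3/16) * φ x ^ 4 + (φ x * φ' x) / 2)
    (((continuous_const.mul (hφc.pow 2)).sub (continuous_const.mul (hφc.pow 4))).add
      ((hφc.mul hφ'c).div_const 2)) (tQ _ hφ0 hφ'0) (tQ _ hφ0' hφ'0')
  obtain ⟨MP, hMP0, hMP⟩ := bdd_of_tendsto_zero (f := fun x => φ x ^ 2 / 2)
    ((hφc.pow 2).div_const 2) (by simpa using (hφ0.pow 2).div_const 2)
    (by simpa using (hφ0'.pow 2).div_const 2)
  set C : ℝ := 1 + (a + MQ) + 2 * MP with hC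
  -- the difference w = v - kφ satisfies w'' = (a+q₀) w - p w'
  have hQident : ∀ x, v'' x - k * φ'' x
      = (a + ((c/2) * φ x ^ 2 - (3/16) * φ x ^ 4 + (φ x * φ' x) / 2)) * (v x - k * φ x)
        - (φ x ^ 2 / 2) * (v' x - k * φ' x) := by
    intro x
    linear_combination (-1 : ℝ) * heqv x + k * heqφ x
  -- energy
  have hE : ∀ x, HasDerivAt (fun x => (v x - k * φ x)^2 + (v' x - k * φ' x)^2)
      (2 * (v x - k * φ x) * (v' x - k * φ' x)
        + 2 * (v' x - k * φ' x) * (v'' x - k * φ'' x)) x := by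
    intro x
    have hw := (hv1 x).sub ((hφ1 x).const_mul k)
    have hw' := (hv2 x).sub ((hφ2 x).const_mul k)
    have h := (hw.pow 2).add (hw'.pow 2)
    exact h.congr_deriv (by push_cast; simp only [Pi.sub_apply]; ring)
  have hEbnd : ∀ x, |2 * (v x - k * φ x) * (v' x - k * φ' x)
      + 2 * (v' x - k * φ' x) * (v'' x - k * φ'' x)|
      ≤ C * ((v x - k * φ x)^2 + (v' x - k * φ' x)^2) := by
    intro x
    rw [hQident x]
    have hq1 : -MQ ≤ (c/2) * φ x ^ 2 - (3/16) * φ x ^ 4 + (φ x * φ' x) / 2 :=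
      (abs_le.1 (hMQ x)).1
    have hq2 : (c/2) * φ x ^ 2 - (3/16) * φ x ^ 4 + (φ x * φ' x) / 2 ≤ MQ :=
      (abs_le.1 (hMQ x)).2
    have hp2 : φ x ^ 2 / 2 ≤ MP := (abs_le.1 (hMP x)).2
    set w := v x - k * φ x with hw
    set w' := v' x - k * φ' x with hw'
    set q0 := (c/2) * φ x ^ 2 - (3/16) * φ x ^ 4 + (φ x * φ' x) / 2 with hq0
    set p := φ x ^ 2 / 2 with hpdef
    have hp0 : 0 ≤ p := by positivity
    have h1 : 0 ≤ ((a + MQ) + (a + q0)) * (w - w')^2 :=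
      mul_nonneg (by linarith) (sq_nonneg _)
    have h2 : 0 ≤ ((a + MQ) - (a + q0)) * (w + w')^2 :=
      mul_nonneg (by linarith) (sq_nonneg _)
    have h1' : 0 ≤ ((a + MQ) + (a + q0)) * (w + w')^2 :=
      mul_nonneg (by linarith) (sq_nonneg _)
    have h2' : 0 ≤ ((a + MQ) - (a + q0)) * (w - w')^2 :=
      mul_nonneg (by linarith) (sq_nonneg _)
    have h3a : 0 ≤ (MP - p) * w' ^ 2 := mul_nonneg (by linarith) (sq_nonneg _)
    have h4 : 0 ≤ p * w' ^ 2 := mul_nonneg hp0 (sq_nonneg _)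
    have h5 : 0 ≤ MP * w ^ 2 := mul_nonneg hMP0 (sq_nonneg _)
    have h6 : 0 ≤ MP * w' ^ 2 := mul_nonneg hMP0 (sq_nonneg _)
    rw [abs_le, hC]
    constructor
    · linarith [sq_nonneg (w + w'), sq_nonneg (w - w'), h1', h2', h3a, h5]
    · linarith [sq_nonneg (w + w'), sq_nonneg (w - w'), h1, h2, h4, h5, h6]
  -- decreasing auxiliary function forward
  have hg : ∀ x, HasDerivAt
      (fun x => ((v x - k * φ x)^2 + (v' x - k * φ' x)^2) * Real.exp (-(C * x)))
      ((2 * (v x - k * φ x) * (v' x - k * φ' x)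
        + 2 * (v' x - k * φ' x) * (v'' x - k * φ'' x)
        - C * ((v x - k * φ x)^2 + (v' x - k * φ' x)^2)) * Real.exp (-(C * x))) x := by
    intro x
    have hlin : HasDerivAt (fun x : ℝ => -(C * x)) (-C) x := by
      exact ((hasDerivAt_id x).const_mul C).neg.congr_deriv (by simp)
    have h := (hE x).mul hlin.exp
    exact h.congr_deriv (by ring)
  have hh : ∀ x, HasDerivAt
      (fun x => ((v x - k * φ x)^2 + (v' x - k * φ' x)^2) * Real.exp (C * x))
      ((2 * (v x - k * φ x) * (v' x - k * φ' x)
        + 2 * (v' x - k * φ' x) * (v'' x - k * φ'' x)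
        + C * ((v x - k * φ x)^2 + (v' x - k * φ' x)^2)) * Real.exp (C * x)) x := by
    intro x
    have hlin : HasDerivAt (fun x : ℝ => C * x) C x := by
      simpa using ((hasDerivAt_id x).const_mul C)
    have h := (hE x).mul hlin.exp
    exact h.congr_deriv (by ring)
  have hganti : Antitone
      (fun x => ((v x - k * φ x)^2 + (v' x - k * φ' x)^2) * Real.exp (-(C * x))) := by
    apply antitone_of_deriv_nonpos (fun x => (hg x).differentiableAt)
    intro x
    rw [(hg x).deriv]
    have h := (abs_le.1 (hEbnd x)).2
    have he := (Real.exp_pos (-(C * x))).le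
    nlinarith [mul_nonneg (sub_nonneg.2 h) he]
  have hhmono : Monotone
      (fun x => ((v x - k * φ x)^2 + (v' x - k * φ' x)^2) * Real.exp (C * x)) := by
    apply monotone_of_deriv_nonneg (fun x => (hh x).differentiableAt)
    intro x
    rw [(hh x).deriv]
    have h := (abs_le.1 (hEbnd x)).1
    have he := (Real.exp_pos (C * x)).le
    nlinarith [mul_nonneg (by linarith : (0:ℝ) ≤ 2 * (v x - k * φ x) * (v' x - k * φ' x)
        + 2 * (v' x - k * φ' x) * (v'' x - k * φ'' x)
        + C * ((v x - k * φ x)^2 + (v' x - k * φ' x)^2)) he]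
  -- initial conditions
  have hw0 : v x₀ - k * φ x₀ = 0 := by
    rw [hk]; field_simp; ring
  have hw'0 : v' x₀ - k * φ' x₀ = 0 := by
    have h3x := h3 x₀
    rw [hk]
    field_simp
    linear_combination -h3x
  have hE0 : (v x₀ - k * φ x₀)^2 + (v' x₀ - k * φ' x₀)^2 = 0 := by
    rw [hw0, hw'0]; ring
  refine ⟨k, funext fun x => ?_⟩
  have hEx : (v x - k * φ x)^2 + (v' x - k * φ' x)^2 ≤ 0 := by
    rcases le_total x₀ x with hle | hle
    · have h : ((v x - k * φ x)^2 + (v' x - k * φ' x)^2) * Real.exp (-(C * x))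
          ≤ ((v x₀ - k * φ x₀)^2 + (v' x₀ - k * φ' x₀)^2) * Real.exp (-(C * x₀)) :=
        hganti hle
      rw [hE0, zero_mul] at h
      nlinarith [Real.exp_pos (-(C * x))]
    · have h : ((v x - k * φ x)^2 + (v' x - k * φ' x)^2) * Real.exp (C * x)
          ≤ ((v x₀ - k * φ x₀)^2 + (v' x₀ - k * φ' x₀)^2) * Real.exp (C * x₀) :=
        hhmono hle
      rw [hE0, zero_mul] at h
      nlinarith [Real.exp_pos (C * x)]
  have hsq : (v x - k * φ x)^2 = 0 :=
    le_antisymm (by nlinarith [sq_nonneg (v' x - k * φ' x)]) (sq_nonneg _)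
  have := (pow_eq_zero_iff two_ne_zero).mp hsq
  linarith
end

section
/- Let A be a self-adjoint bounded-below operator on a real Hilbert space with exactly one simple negative eigenvalue -λ < 0 with normalized eigenvector ξ, a kernel K, and the rest of the spectrum bounded away from 0 from above. Suppose ψ = αξ + ζ + η with α ≠ 0, ζ ∈ K, η in the positive spectral subspace, satisfies ⟨Aψ, ψ⟩ < 0. Then any ε ≠ 0 orthogonal to K and satisfying ⟨Aψ, ε⟩ = 0 verifies ⟨Aε, ε⟩ > 0. -/
open RealInnerProductSpace

/-- abstract positivity argument. For a symmetric operator `A`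
with exactly one simple negative eigenvalue `-λ` (eigenvector `ξ`), kernel `K`
and positive spectral subspace `P`, if `ψ = αξ + ζ + η` (`α ≠ 0`, `ζ ∈ K`,
`η ∈ P`) satisfies `⟨Aψ,ψ⟩ < 0`, then any `ε ≠ 0` orthogonal to `K`
(decomposed as `ε = βξ + ρ`, `ρ ∈ P`) with `⟨Aψ,ε⟩ = 0` satisfies
`⟨Aε,ε⟩ > 0`. -/
theorem stmt7 {H : Type*} [NormedAddCommGroup H] [InnerProductSpace ℝ H]
    (A : H →L[ℝ] H) (hsym : ∀ x y : H, ⟪A x, y⟫ = ⟪x, A y⟫)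
    (lam : ℝ) (hlam : 0 < lam) (ξ : H) (hξ : ‖ξ‖ = 1) (hAξ : A ξ = (-lam) • ξ)
    (K P : Submodule ℝ H)
    (hK : ∀ ζ ∈ K, A ζ = 0)
    (hPpos : ∀ p ∈ P, 0 ≤ ⟪A p, p⟫)
    (hPposdef : ∀ p ∈ P, p ≠ 0 → 0 < ⟪A p, p⟫)
    (hPinv : ∀ p ∈ P, A p ∈ P)
    (hξP : ∀ p ∈ P, ⟪ξ, p⟫ = 0) (hξK : ∀ ζ ∈ K, ⟪ξ, ζ⟫ = 0)
    (hKP : ∀ ζ ∈ K, ∀ p ∈ P, ⟪ζ, p⟫ = 0)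
    (ψ : H) (α : ℝ) (hα : α ≠ 0) (ζ : H) (hζ : ζ ∈ K) (η : H) (hη : η ∈ P)
    (hψ : ψ = α • ξ + ζ + η) (hneg : ⟪A ψ, ψ⟫ < 0)
    (ε : H) (hεne : ε ≠ 0) (hεK : ∀ k ∈ K, ⟪ε, k⟫ = 0)
    (β : ℝ) (ρ : H) (hρ : ρ ∈ P) (hε : ε = β • ξ + ρ)
    (horth : ⟪A ψ, ε⟫ = 0) :
    0 < ⟪A ε, ε⟫ := by
  have hξξ : ⟪ξ, ξ⟫ = 1 := by
    rw [real_inner_self_eq_norm_sq, hξ]; norm_num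
  have hAηξ : ⟪A η, ξ⟫ = 0 := by
    rw [hsym, hAξ, real_inner_smul_right, real_inner_comm, hξP η hη, mul_zero]
  have hAρξ : ⟪A ρ, ξ⟫ = 0 := by
    rw [hsym, hAξ, real_inner_smul_right, real_inner_comm, hξP ρ hρ, mul_zero]
  have hAηζ : ⟪A η, ζ⟫ = 0 := by
    rw [hsym, hK ζ hζ, inner_zero_right]
  have hAηρ' : ⟪A ρ, η⟫ = ⟪A η, ρ⟫ := by
    rw [hsym, real_inner_comm]
  have hξη : ⟪ξ, η⟫ = 0 := hξP η hη
  have hξρ : ⟪ξ, ρ⟫ = 0 := hξP ρ hρ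
  have hξζ : ⟪ξ, ζ⟫ = 0 := hξK ζ hζ
  have hζη : ⟪ζ, η⟫ = 0 := hKP ζ hζ η hη
  have hζρ : ⟪ζ, ρ⟫ = 0 := hKP ζ hζ ρ hρ
  have hAζ : A ζ = 0 := hK ζ hζ
  set a := ⟪A η, η⟫ with ha
  set b := ⟪A η, ρ⟫ with hb
  set c := ⟪A ρ, ρ⟫ with hc
  have h1 : ⟪A ψ, ψ⟫ = -(α^2*lam) + a := by
    simp only [hψ, map_add, map_smul, hAξ, hAζ, inner_add_left, inner_add_right,
      inner_smul_left, inner_smul_right, real_inner_smul_left, real_inner_smul_right,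
      inner_zero_left, hξξ, hξη, hξζ, hζη, hAηξ, hAηζ, ← ha]
    have h1' : ⟪ζ, ξ⟫ = 0 := by rw [real_inner_comm]; exact hξζ
    have h2' : ⟪η, ξ⟫ = 0 := by rw [real_inner_comm]; exact hξη
    simp [h1', h2', hζη, starRingEnd_apply, star_trivial]
    ring
  have h2 : ⟪A ψ, ε⟫ = -(α*β*lam) + b := by
    simp only [hψ, hε, map_add, map_smul, hAξ, hAζ, inner_add_left, inner_add_right,
      inner_smul_left, inner_smul_right, real_inner_smul_left, real_inner_smul_right,
      inner_zero_left, hξξ, hξρ, hAηξ, ← hb]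
    have h1' : ⟪ζ, ξ⟫ = 0 := by rw [real_inner_comm]; exact hξζ
    simp [h1', hζρ, starRingEnd_apply, star_trivial]
    ring
  have h3 : ⟪A ε, ε⟫ = -(β^2*lam) + c := by
    simp only [hε, map_add, map_smul, hAξ, inner_add_left, inner_add_right,
      inner_smul_left, inner_smul_right, real_inner_smul_left, real_inner_smul_right,
      hξξ, hξρ, hAρξ, ← hc, starRingEnd_apply, star_trivial]
    ring
  have hbval : b = α*β*lam := by linarith [h2, horth]
  have haval : a < α^2*lam := by linarith [h1, hneg]
  -- Cauchy–Schwarz for the positive form on P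
  have hcs : b^2 ≤ a*c := by
    have hdisc : discrim c (2*b) a ≤ 0 := by
      apply discrim_le_zero
      intro t
      have hmem : t • ρ + η ∈ P := P.add_mem (P.smul_mem t hρ) hη
      have := hPpos _ hmem
      have hexp : ⟪A (t • ρ + η), t • ρ + η⟫ = c * t^2 + (2*b) * t + a := by
        simp only [map_add, map_smul, inner_add_left, inner_add_right,
          real_inner_smul_left, real_inner_smul_right, hAηρ', ← ha, ← hb, ← hc]
        ring
      linarith [hexp ▸ this]
    rw [discrim] at hdisc
    nlinarith
  rw [h3]
  rcases eq_or_ne β 0 with hβ | hβ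
  · have hρne : ρ ≠ 0 := by
      intro h; apply hεne; rw [hε, hβ, h]; simp
    have := hPposdef ρ hρ hρne
    rw [hβ]; simpa using this
  · have hρne : ρ ≠ 0 := by
      intro h
      have : b = 0 := by rw [hb, h, inner_zero_right]
      rw [hbval] at this
      exact hβ (by
        rcases mul_eq_zero.mp this with h' | h'
        · rcases mul_eq_zero.mp h' with h'' | h''
          · exact absurd h'' hα
          · exact h''
        · exact absurd h' (ne_of_gt hlam))
    have hcpos : 0 < c := hPposdef ρ hρ hρne
    have key : β^2*lam < c := by
      have h4 : (α*β*lam)^2 ≤ a*c := by rw [← hbval]; exact hcs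
      have h5 : a*c < α^2*lam*c := by
        exact mul_lt_mul_of_pos_right haval hcpos
      have h6 : (α*β*lam)^2 < α^2*lam*c := lt_of_le_of_lt h4 h5
      have hα2 : 0 < α^2*lam := by positivity
      nlinarith
    linarith
end

section
/- Let w ∈ H¹(ℝ;ℂ) and let h ≥ 0 be a C² bounded function on ℝ such that √h is C¹ and (h')² ≲ h. Then ∫_ℝ |w|⁶ h dx ≤ 8 (∫_{supp(h)} |w|² dx)² · (∫_ℝ |w_x|² h dx + ∫_ℝ |w|² (h')²/h dx). -/
open MeasureTheory

lemma myCS {f g : ℝ → ℝ} (hfn : ∀ x, 0 ≤ f x) (hgn : ∀ x, 0 ≤ g x)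
    (hfm : AEStronglyMeasurable f volume) (hgm : AEStronglyMeasurable g volume)
    (hf2 : Integrable (fun x => f x ^ 2) volume) (hg2 : Integrable (fun x => g x ^ 2) volume) :
    ∫ x, f x * g x ≤ Real.sqrt (∫ x, f x ^ 2) * Real.sqrt (∫ x, g x ^ 2) := by
  have hpq : Real.HolderConjugate 2 2 := Real.HolderConjugate.two_two
  have hf : MemLp f 2 volume := (memLp_two_iff_integrable_sq hfm).2 hf2
  have hg : MemLp g 2 volume := (memLp_two_iff_integrable_sq hgm).2 hg2
  have h2 : (ENNReal.ofReal (2:ℝ)) = 2 := by norm_num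
  have := integral_mul_le_Lp_mul_Lq_of_nonneg (μ := volume) hpq
    (Filter.Eventually.of_forall hfn) (Filter.Eventually.of_forall hgn)
    (h2 ▸ hf) (h2 ▸ hg)
  calc ∫ x, f x * g x ≤ (∫ x, f x ^ (2:ℝ)) ^ (1/2:ℝ) * (∫ x, g x ^ (2:ℝ)) ^ (1/2:ℝ) := this
    _ = Real.sqrt (∫ x, f x ^ 2) * Real.sqrt (∫ x, g x ^ 2) := by
        rw [← Real.sqrt_eq_rpow, ← Real.sqrt_eq_rpow]
        norm_num [show ((2:ℝ):ℝ) = ((2:ℕ):ℝ) by norm_num, Real.rpow_natCast]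

lemma mySup {g G : ℝ → ℝ} (hd : ∀ x, HasDerivAt g (G x) x)
    (hgi : Integrable g volume) (hGi : Integrable G volume) (x : ℝ) :
    g x ≤ ∫ y, |G y| := by
  refine le_of_forall_pos_le_add fun ε hε => ?_
  have hex : ∃ a, a ≤ x ∧ g a < ε := by
    by_contra hcon
    push_neg at hcon
    have hgc : Continuous g := continuous_iff_continuousAt.2 fun y => (hd y).continuousAt
    have hmono : ∫⁻ y in Set.Iic x, ENNReal.ofReal ε ∂volume
        ≤ ∫⁻ y in Set.Iic x, ENNReal.ofReal (g y) ∂volume := by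
      refine setLIntegral_mono (by fun_prop) ?_
      · intro y hy
        exact ENNReal.ofReal_le_ofReal (hcon y hy)
    have h1 : ∫⁻ y in Set.Iic x, ENNReal.ofReal ε ∂volume = ⊤ := by
      rw [setLIntegral_const, Real.volume_Iic]
      simp [ENNReal.mul_top, ENNReal.ofReal_eq_zero, not_le.2 hε]
    have h2 : ∫⁻ y in Set.Iic x, ENNReal.ofReal (g y) ∂volume < ⊤ :=
      lt_of_le_of_lt (setLIntegral_le_lintegral _ _) hgi.lintegral_lt_top
    rw [h1] at hmono
    exact absurd (top_le_iff.mp hmono) h2.ne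
  obtain ⟨a, hax, ha⟩ := hex
  have hftc : ∫ y in a..x, G y = g x - g a :=
    intervalIntegral.integral_eq_sub_of_hasDerivAt (fun y _ => hd y) hGi.intervalIntegrable
  have h3 : |∫ y in a..x, G y| ≤ ∫ y in a..x, |G y| :=
    intervalIntegral.abs_integral_le_integral_abs hax
  have h4 : ∫ y in a..x, |G y| ≤ ∫ y, |G y| := by
    rw [intervalIntegral.integral_of_le hax]
    exact setIntegral_le_integral hGi.abs (Filter.Eventually.of_forall fun y => abs_nonneg _)
  have : g x - g a ≤ ∫ y, |G y| := by
    rw [← hftc]; exact (le_abs_self _).trans (h3.trans h4)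
  linarith

lemma myFinal {S A B1 B2 : ℝ} (hS0 : 0 ≤ S) (hA0 : 0 ≤ A) (hB10 : 0 ≤ B1) (hB20 : 0 ≤ B2)
    (hSle : S ≤ 2 * (Real.sqrt A * Real.sqrt B1) + Real.sqrt A * (Real.sqrt B2 / 2)) :
    S ^ 2 * A ≤ 8 * A ^ 2 * (B1 + B2) := by
  have ha : Real.sqrt A ^ 2 = A := Real.sq_sqrt hA0
  have hb1 : Real.sqrt B1 ^ 2 = B1 := Real.sq_sqrt hB10
  have hb2 : Real.sqrt B2 ^ 2 = B2 := Real.sq_sqrt hB20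
  set a := Real.sqrt A
  set b1 := Real.sqrt B1
  set b2 := Real.sqrt B2
  have hX : S ^ 2 ≤ (2 * (a * b1) + a * (b2 / 2)) ^ 2 := pow_le_pow_left₀ hS0 hSle 2
  calc S ^ 2 * A ≤ (2 * (a * b1) + a * (b2 / 2)) ^ 2 * A :=
        mul_le_mul_of_nonneg_right hX hA0
    _ = (2 * (a * b1) + a * (b2 / 2)) ^ 2 * a ^ 2 := by rw [ha]
    _ = a ^ 4 * (2 * b1 + b2 / 2) ^ 2 := by ring
    _ ≤ a ^ 4 * (8 * (b1 ^ 2 + b2 ^ 2)) :=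
        mul_le_mul_of_nonneg_left (by nlinarith [sq_nonneg (b1 - b2)]) (by positivity)
    _ = 8 * (a ^ 2) ^ 2 * (b1 ^ 2 + b2 ^ 2) := by ring
    _ = 8 * A ^ 2 * (B1 + B2) := by rw [ha, hb1, hb2]

/-- localized Gagliardo–Nirenberg type inequality. For `w ∈ H¹(ℝ;ℂ)`
and `h ≥ 0` a `C²` bounded function with `√h` of class `C¹` and `(h')² ≲ h`,
`∫ |w|⁶ h ≤ 8 (∫_{supp h} |w|²)² (∫ |w_x|² h + ∫ |w|² (h')²/h)`. -/
theorem stmt8 (w w' : ℝ → ℂ) (h : ℝ → ℝ)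
    (hw : ∀ x, HasDerivAt w (w' x) x)
    (hw2 : MemLp w 2 volume) (hw'2 : MemLp w' 2 volume)
    (hC2 : ContDiff ℝ 2 h) (hbd : ∃ M, ∀ x, h x ≤ M) (hpos : ∀ x, 0 ≤ h x)
    (hsqrt : ContDiff ℝ 1 (fun x => Real.sqrt (h x)))
    (hquot : ∃ C, ∀ x, (deriv h x) ^ 2 ≤ C * h x) :
    (∫ x, ‖w x‖ ^ 6 * h x)
      ≤ 8 * (∫ x in Function.support h, ‖w x‖ ^ 2) ^ 2 *
          ((∫ x, ‖w' x‖ ^ 2 * h x) + ∫ x, ‖w x‖ ^ 2 * ((deriv h x) ^ 2 / h x)) := by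
  classical
  obtain ⟨M, hM⟩ := hbd
  obtain ⟨C0, hC0⟩ := hquot
  set C := max C0 0 with hCdef
  have hC : ∀ x, (deriv h x) ^ 2 ≤ C * h x := fun x =>
    (hC0 x).trans (mul_le_mul_of_nonneg_right (le_max_left _ _) (hpos x))
  have hCnn : (0:ℝ) ≤ C := le_max_right _ _
  have hM0 : (0:ℝ) ≤ M := (hpos 0).trans (hM 0)
  set s : ℝ → ℝ := fun x => Real.sqrt (h x) with hsdef
  have hsdiff : Differentiable ℝ s := hsqrt.differentiable (by norm_num)
  have hs' : ∀ x, HasDerivAt s (deriv s x) x := fun x => (hsdiff x).hasDerivAt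
  have hsnn : ∀ x, 0 ≤ s x := fun x => Real.sqrt_nonneg _
  have hssq : ∀ x, s x ^ 2 = h x := fun x => Real.sq_sqrt (hpos x)
  have hsle : ∀ x, s x ≤ Real.sqrt M := fun x => Real.sqrt_le_sqrt (hM x)
  have hhd : ∀ x, HasDerivAt h (deriv h x) x := fun x =>
    ((hC2.differentiable (by norm_num)) x).hasDerivAt
  have hs0 : ∀ x, h x = 0 → deriv s x = 0 := by
    intro x hx
    have hmin : IsLocalMin s x := Filter.Eventually.of_forall fun y => by
      simp only [hsdef]; rw [hx]; simpa using Real.sqrt_nonneg (h y)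
    exact hmin.deriv_eq_zero
  have hd0 : ∀ x, h x = 0 → deriv h x = 0 := by
    intro x hx
    have h1 := hC x; rw [hx, mul_zero] at h1
    exact pow_eq_zero_iff (two_ne_zero) |>.mp (le_antisymm h1 (sq_nonneg _))
  have hskey : ∀ x, (deriv s x) ^ 2 ≤ (1/4) * ((deriv h x) ^ 2 / h x) := by
    intro x
    rcases eq_or_lt_of_le (hpos x) with hx | hx
    · rw [hs0 x hx.symm, hd0 x hx.symm]; simp
    · have hne : h x ≠ 0 := ne_of_gt hx
      have hds : HasDerivAt s (deriv h x / (2 * Real.sqrt (h x))) x := (hhd x).sqrt hne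
      rw [hds.deriv, div_pow, mul_pow, Real.sq_sqrt (hpos x)]
      apply le_of_eq; ring
  have hs'sq : ∀ x, (deriv s x) ^ 2 ≤ C / 4 := by
    intro x
    refine (hskey x).trans ?_
    rcases eq_or_lt_of_le (hpos x) with hx | hx
    · rw [hd0 x hx.symm]; simp [hCnn]
      positivity
    · have h2 : (deriv h x) ^ 2 / h x ≤ C := (div_le_iff₀ hx).2 (hC x)
      linarith
  have hs'bd : ∀ x, |deriv s x| ≤ Real.sqrt C / 2 := by
    intro x
    have h4 : Real.sqrt (C/4) = Real.sqrt C / 2 := by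
      rw [Real.sqrt_div hCnn, show Real.sqrt 4 = 2 by
        rw [show (4:ℝ) = 2^2 by norm_num, Real.sqrt_sq (by norm_num : (0:ℝ) ≤ 2)]]
    calc |deriv s x| = Real.sqrt ((deriv s x)^2) := (Real.sqrt_sq_eq_abs _).symm
      _ ≤ Real.sqrt (C/4) := Real.sqrt_le_sqrt (hs'sq x)
      _ = Real.sqrt C / 2 := h4
  -- continuity
  have hwc : Continuous w := continuous_iff_continuousAt.2 fun x => (hw x).continuousAt
  have hsc : Continuous s := hsqrt.continuous
  have hs'c : Continuous (deriv s) := hsqrt.continuous_deriv le_rfl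
  have hhc : Continuous h := hC2.continuous
  -- derivative of ‖w‖²
  have hnormsq : ∀ z : ℂ, ‖z‖ ^ 2 = z.re ^ 2 + z.im ^ 2 := by
    intro z; rw [Complex.sq_norm, Complex.normSq_apply]; ring
  set d : ℝ → ℝ := fun x => 2 * ((w x).re * (w' x).re + (w x).im * (w' x).im) with hddef
  have hre : ∀ x, HasDerivAt (fun y => (w y).re) ((w' x).re) x := fun x => by
    exact (Complex.reCLM.hasFDerivAt.comp_hasDerivAt x (hw x))
  have him : ∀ x, HasDerivAt (fun y => (w y).im) ((w' x).im) x := fun x => by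
    exact (Complex.imCLM.hasFDerivAt.comp_hasDerivAt x (hw x))
  have hp : ∀ x, HasDerivAt (fun y => ‖w y‖ ^ 2) (d x) x := by
    intro x
    have h1 := ((hre x).mul (hre x)).add ((him x).mul (him x))
    have h2 : (fun y => ‖w y‖ ^ 2) = fun y => (w y).re * (w y).re + (w y).im * (w y).im := by
      funext y; rw [hnormsq]; ring
    rw [h2]
    rw [show d x = (w' x).re * (w x).re + (w x).re * (w' x).re + ((w' x).im * (w x).im + (w x).im * (w' x).im) by
      simp only [hddef]; ring]
    exact h1
  have hdbd : ∀ x, |d x| ≤ 2 * (‖w x‖ * ‖w' x‖) := by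
    intro x
    have key : ((w x).re * (w' x).re + (w x).im * (w' x).im) ^ 2
        ≤ ((w x).re ^ 2 + (w x).im ^ 2) * ((w' x).re ^ 2 + (w' x).im ^ 2) := by
      nlinarith [sq_nonneg ((w x).re * (w' x).im - (w x).im * (w' x).re)]
    have h1 : |(w x).re * (w' x).re + (w x).im * (w' x).im| ≤ ‖w x‖ * ‖w' x‖ := by
      calc |(w x).re * (w' x).re + (w x).im * (w' x).im|
          = Real.sqrt (((w x).re * (w' x).re + (w x).im * (w' x).im) ^ 2) :=
            (Real.sqrt_sq_eq_abs _).symm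
        _ ≤ Real.sqrt ((‖w x‖ * ‖w' x‖) ^ 2) := by
            refine Real.sqrt_le_sqrt ?_
            rw [mul_pow, hnormsq, hnormsq]; exact key
        _ = ‖w x‖ * ‖w' x‖ := Real.sqrt_sq (by positivity)
    calc |d x| = 2 * |(w x).re * (w' x).re + (w x).im * (w' x).im| := by
          rw [hddef]; rw [abs_mul]; norm_num
      _ ≤ 2 * (‖w x‖ * ‖w' x‖) := by linarith
  -- integrability basics
  have hwm : AEStronglyMeasurable w volume := hw2.1
  have hw'm : AEStronglyMeasurable w' volume := hw'2.1
  have i2w : Integrable (fun x => ‖w x‖ ^ 2) volume := by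
    have h1 := hw2.integrable_norm_rpow (by norm_num) (by norm_num)
    have h2 : ((2:ENNReal)).toReal = ((2:ℕ):ℝ) := by norm_num
    simpa [h2, Real.rpow_natCast] using h1
  have i2w' : Integrable (fun x => ‖w' x‖ ^ 2) volume := by
    have h1 := hw'2.integrable_norm_rpow (by norm_num) (by norm_num)
    have h2 : ((2:ENNReal)).toReal = ((2:ℕ):ℝ) := by norm_num
    simpa [h2, Real.rpow_natCast] using h1
  have iww' : Integrable (fun x => ‖w x‖ * ‖w' x‖) volume := by
    refine (i2w.add i2w').mono (hwm.norm.mul hw'm.norm)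
      (Filter.Eventually.of_forall fun x => ?_)
    show ‖‖w x‖ * ‖w' x‖‖ ≤ ‖‖w x‖ ^ 2 + ‖w' x‖ ^ 2‖
    rw [Real.norm_of_nonneg (mul_nonneg (norm_nonneg _) (norm_nonneg _)),
      Real.norm_of_nonneg (add_nonneg (sq_nonneg _) (sq_nonneg _))]
    nlinarith [sq_nonneg (‖w x‖ - ‖w' x‖)]
  -- the function g = ‖w‖² s and its derivative G
  set G : ℝ → ℝ := fun x => d x * s x + ‖w x‖ ^ 2 * deriv s x with hGdef
  have hg' : ∀ x, HasDerivAt (fun y => ‖w y‖ ^ 2 * s y) (G x) x := fun x =>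
    (hp x).mul (hs' x)
  have hg_i : Integrable (fun x => ‖w x‖ ^ 2 * s x) volume := by
    refine (i2w.const_mul (Real.sqrt M)).mono
      (((hwc.norm.pow 2).mul hsc).aestronglyMeasurable)
      (Filter.Eventually.of_forall fun x => ?_)
    rw [Real.norm_of_nonneg (by positivity), Real.norm_of_nonneg
      (by positivity)]
    exact mul_le_mul_of_nonneg_left (hsle x) (by positivity) |>.trans_eq (mul_comm _ _)
  have hG_m : AEStronglyMeasurable G volume := by
    have h1 : AEStronglyMeasurable (fun x => (w' x).re) volume :=
      Complex.continuous_re.comp_aestronglyMeasurable hw'm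
    have h2 : AEStronglyMeasurable (fun x => (w' x).im) volume :=
      Complex.continuous_im.comp_aestronglyMeasurable hw'm
    have hd_m : AEStronglyMeasurable d volume := by
      refine AEStronglyMeasurable.const_mul ?_ 2
      exact ((((Complex.continuous_re.comp hwc).aestronglyMeasurable).mul h1).add
        (((Complex.continuous_im.comp hwc).aestronglyMeasurable).mul h2))
    exact (hd_m.mul hsc.aestronglyMeasurable).add
      ((hwc.norm.pow 2).mul hs'c).aestronglyMeasurable
  have hG_i : Integrable G volume := by
    refine ((iww'.const_mul (2 * Real.sqrt M)).add
      (i2w.const_mul (Real.sqrt C / 2))).mono hG_m (Filter.Eventually.of_forall fun x => ?_)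
    have hb1 : |d x * s x| ≤ 2 * Real.sqrt M * (‖w x‖ * ‖w' x‖) := by
      rw [abs_mul, abs_of_nonneg (hsnn x)]
      calc |d x| * s x ≤ (2 * (‖w x‖ * ‖w' x‖)) * Real.sqrt M :=
            mul_le_mul (hdbd x) (hsle x) (hsnn x) (by positivity)
        _ = 2 * Real.sqrt M * (‖w x‖ * ‖w' x‖) := by ring
    have hb2 : |‖w x‖ ^ 2 * deriv s x| ≤ Real.sqrt C / 2 * ‖w x‖ ^ 2 := by
      rw [abs_mul, abs_of_nonneg (by positivity : (0:ℝ) ≤ ‖w x‖ ^ 2)]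
      calc ‖w x‖ ^ 2 * |deriv s x| ≤ ‖w x‖ ^ 2 * (Real.sqrt C / 2) :=
            mul_le_mul_of_nonneg_left (hs'bd x) (by positivity)
        _ = Real.sqrt C / 2 * ‖w x‖ ^ 2 := by ring
    show ‖G x‖ ≤ ‖2 * Real.sqrt M * (‖w x‖ * ‖w' x‖) + Real.sqrt C / 2 * ‖w x‖ ^ 2‖
    calc ‖G x‖ ≤ |d x * s x| + |‖w x‖ ^ 2 * deriv s x| := abs_add_le _ _
      _ ≤ 2 * Real.sqrt M * (‖w x‖ * ‖w' x‖) + Real.sqrt C / 2 * ‖w x‖ ^ 2 :=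
          add_le_add hb1 hb2
      _ ≤ ‖2 * Real.sqrt M * (‖w x‖ * ‖w' x‖) + Real.sqrt C / 2 * ‖w x‖ ^ 2‖ :=
          le_abs_self _
  set S := ∫ y, |G y| with hSdef
  have hS0 : (0:ℝ) ≤ S := integral_nonneg fun y => abs_nonneg _
  have hgle : ∀ x, ‖w x‖ ^ 2 * s x ≤ S := fun x => mySup hg' hg_i hG_i x
  -- support and main quantities
  have hsupp_open : IsOpen (Function.support h) := by
    rw [Function.support_eq_preimage]
    exact isOpen_compl_singleton.preimage hhc
  have hsupp_meas : MeasurableSet (Function.support h) := hsupp_open.measurableSet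
  set A := ∫ x in Function.support h, ‖w x‖ ^ 2 with hAdef
  set B1 := ∫ x, ‖w' x‖ ^ 2 * h x with hB1def
  set B2 := ∫ x, ‖w x‖ ^ 2 * ((deriv h x) ^ 2 / h x) with hB2def
  have hA0 : (0:ℝ) ≤ A := setIntegral_nonneg hsupp_meas fun x _ => sq_nonneg _
  have hB10 : (0:ℝ) ≤ B1 := integral_nonneg fun x => mul_nonneg (sq_nonneg _) (hpos x)
  have hB20 : (0:ℝ) ≤ B2 := integral_nonneg fun x =>
    mul_nonneg (sq_nonneg _) (div_nonneg (sq_nonneg _) (hpos x))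
  -- integrability of B1, B2 integrands
  have aesqw : AEStronglyMeasurable (fun x => ‖w x‖ ^ 2) volume :=
    (hwc.norm.pow 2).aestronglyMeasurable
  have aesqw' : AEStronglyMeasurable (fun x => ‖w' x‖ ^ 2) volume := by
    have := hw'm.norm.mul hw'm.norm
    simpa [pow_two, Pi.mul_def] using this
  have iB1 : Integrable (fun x => ‖w' x‖ ^ 2 * h x) volume := by
    refine (i2w'.const_mul M).mono (aesqw'.mul hhc.aestronglyMeasurable)
      (Filter.Eventually.of_forall fun x => ?_)
    show ‖‖w' x‖ ^ 2 * h x‖ ≤ ‖M * ‖w' x‖ ^ 2‖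
    rw [Real.norm_of_nonneg (mul_nonneg (sq_nonneg _) (hpos x)),
      Real.norm_of_nonneg (mul_nonneg hM0 (sq_nonneg _))]
    calc ‖w' x‖ ^ 2 * h x ≤ ‖w' x‖ ^ 2 * M := mul_le_mul_of_nonneg_left (hM x) (sq_nonneg _)
      _ = M * ‖w' x‖ ^ 2 := mul_comm _ _
  have hqle : ∀ x, (deriv h x) ^ 2 / h x ≤ C := by
    intro x
    rcases eq_or_lt_of_le (hpos x) with hx | hx
    · rw [← hx, div_zero]; exact hCnn
    · exact (div_le_iff₀ hx).2 (hC x)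
  have iB2 : Integrable (fun x => ‖w x‖ ^ 2 * ((deriv h x) ^ 2 / h x)) volume := by
    have hh'c : Continuous (deriv h) := hC2.continuous_deriv one_le_two
    refine (i2w.const_mul C).mono (aesqw.mul
      (((hh'c.measurable.pow_const 2).div hhc.measurable).aestronglyMeasurable))
      (Filter.Eventually.of_forall fun x => ?_)
    show ‖‖w x‖ ^ 2 * ((deriv h x) ^ 2 / h x)‖ ≤ ‖C * ‖w x‖ ^ 2‖
    rw [Real.norm_of_nonneg (mul_nonneg (sq_nonneg _) (div_nonneg (sq_nonneg _) (hpos x))),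
      Real.norm_of_nonneg (mul_nonneg hCnn (sq_nonneg _))]
    calc ‖w x‖ ^ 2 * ((deriv h x) ^ 2 / h x) ≤ ‖w x‖ ^ 2 * C :=
          mul_le_mul_of_nonneg_left (hqle x) (sq_nonneg _)
      _ = C * ‖w x‖ ^ 2 := mul_comm _ _
  -- indicator function u
  set u : ℝ → ℝ := fun x => Set.indicator (Function.support h) (fun y => ‖w y‖) x with hudef
  have hu_m : AEStronglyMeasurable u volume :=
    (hwc.norm.aestronglyMeasurable).indicator hsupp_meas
  have hu_nn : ∀ x, 0 ≤ u x := fun x =>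
    Set.indicator_nonneg (fun y _ => norm_nonneg _) x
  have hu_sq : ∀ x, u x ^ 2 = Set.indicator (Function.support h) (fun y => ‖w y‖ ^ 2) x := by
    intro x
    by_cases hx : x ∈ Function.support h
    · simp [hudef, Set.indicator_of_mem hx]
    · simp [hudef, Set.indicator_of_notMem hx]
  have hu2_i : Integrable (fun x => u x ^ 2) volume := by
    rw [show (fun x => u x ^ 2) = Set.indicator (Function.support h) (fun y => ‖w y‖ ^ 2)
      from funext hu_sq]
    exact i2w.indicator hsupp_meas
  have hu2_int : ∫ x, u x ^ 2 = A := by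
    rw [show (fun x => u x ^ 2) = Set.indicator (Function.support h) (fun y => ‖w y‖ ^ 2)
      from funext hu_sq]
    exact integral_indicator hsupp_meas
  -- v1 and CS1
  set v1 : ℝ → ℝ := fun x => ‖w' x‖ * s x with hv1def
  have hv1sq : (fun x => v1 x ^ 2) = fun x => ‖w' x‖ ^ 2 * h x := by
    funext x; simp only [hv1def]; rw [mul_pow, hssq]
  have hCS1 : ∫ x, u x * v1 x ≤ Real.sqrt A * Real.sqrt B1 := by
    have := myCS (f := u) (g := v1) hu_nn
      (fun x => mul_nonneg (norm_nonneg _) (hsnn x)) hu_m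
      (hw'm.norm.mul hsc.aestronglyMeasurable) hu2_i (by rw [hv1sq]; exact iB1)
    rwa [hu2_int, show (∫ x, v1 x ^ 2) = B1 by rw [hv1sq]] at this
  -- v2 and CS2
  set v2 : ℝ → ℝ := fun x => ‖w x‖ * |deriv s x| with hv2def
  have hv2sq : ∀ x, v2 x ^ 2 = ‖w x‖ ^ 2 * (deriv s x) ^ 2 := by
    intro x; simp only [hv2def]; rw [mul_pow, sq_abs]
  have hv2_i : Integrable (fun x => v2 x ^ 2) volume := by
    refine (i2w.const_mul (C / 4)).mono
      ((hwc.norm.mul hs'c.abs).pow 2).aestronglyMeasurable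
      (Filter.Eventually.of_forall fun x => ?_)
    show ‖v2 x ^ 2‖ ≤ ‖C / 4 * ‖w x‖ ^ 2‖
    rw [Real.norm_of_nonneg (sq_nonneg _),
      Real.norm_of_nonneg (mul_nonneg (by positivity) (sq_nonneg _)), hv2sq]
    calc ‖w x‖ ^ 2 * (deriv s x) ^ 2 ≤ ‖w x‖ ^ 2 * (C / 4) :=
          mul_le_mul_of_nonneg_left (hs'sq x) (sq_nonneg _)
      _ = C / 4 * ‖w x‖ ^ 2 := mul_comm _ _
  have hv2int_le : ∫ x, v2 x ^ 2 ≤ (1/4) * B2 := by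
    have hle : ∀ x, v2 x ^ 2 ≤ (1/4) * (‖w x‖ ^ 2 * ((deriv h x) ^ 2 / h x)) := by
      intro x
      rw [hv2sq]
      calc ‖w x‖ ^ 2 * (deriv s x) ^ 2
          ≤ ‖w x‖ ^ 2 * ((1/4) * ((deriv h x) ^ 2 / h x)) :=
            mul_le_mul_of_nonneg_left (hskey x) (sq_nonneg _)
        _ = (1/4) * (‖w x‖ ^ 2 * ((deriv h x) ^ 2 / h x)) := by ring
    calc ∫ x, v2 x ^ 2 ≤ ∫ x, (1/4) * (‖w x‖ ^ 2 * ((deriv h x) ^ 2 / h x)) :=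
          integral_mono hv2_i (iB2.const_mul _) hle
      _ = (1/4) * B2 := by rw [integral_const_mul]
  have hCS2 : ∫ x, u x * v2 x ≤ Real.sqrt A * (Real.sqrt B2 / 2) := by
    have h1 := myCS (f := u) (g := v2) hu_nn
      (fun x => mul_nonneg (norm_nonneg _) (abs_nonneg _)) hu_m
      (hwc.norm.mul hs'c.abs).aestronglyMeasurable hu2_i hv2_i
    rw [hu2_int] at h1
    refine h1.trans (mul_le_mul_of_nonneg_left ?_ (Real.sqrt_nonneg _))
    calc Real.sqrt (∫ x, v2 x ^ 2) ≤ Real.sqrt ((1/4) * B2) := Real.sqrt_le_sqrt hv2int_le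
      _ = Real.sqrt B2 / 2 := by
          rw [show (1/4) * B2 = B2 / 4 by ring, Real.sqrt_div hB20,
            show Real.sqrt 4 = 2 by
              rw [show (4:ℝ) = 2 ^ 2 by norm_num, Real.sqrt_sq (by norm_num : (0:ℝ) ≤ 2)]]
  -- pointwise bound on |G|
  have hGbd : ∀ x, |G x| ≤ 2 * (u x * v1 x) + u x * v2 x := by
    intro x
    by_cases hx : x ∈ Function.support h
    · have hu : u x = ‖w x‖ := Set.indicator_of_mem hx _
      rw [hu]
      calc |G x| ≤ |d x * s x| + |‖w x‖ ^ 2 * deriv s x| := abs_add_le _ _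
        _ ≤ 2 * (‖w x‖ * v1 x) + ‖w x‖ * v2 x := by
            have e1 : |d x * s x| ≤ 2 * (‖w x‖ * v1 x) := by
              rw [abs_mul, abs_of_nonneg (hsnn x), hv1def]
              calc |d x| * s x ≤ 2 * (‖w x‖ * ‖w' x‖) * s x :=
                    mul_le_mul_of_nonneg_right (hdbd x) (hsnn x)
                _ = 2 * (‖w x‖ * (‖w' x‖ * s x)) := by ring
            have e2 : |‖w x‖ ^ 2 * deriv s x| ≤ ‖w x‖ * v2 x := by
              rw [abs_mul, abs_of_nonneg (sq_nonneg ‖w x‖), hv2def]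
              apply le_of_eq; ring
            exact add_le_add e1 e2
    · have hx0 : h x = 0 := Function.notMem_support.mp hx
      have hsx : s x = 0 := by simp only [hsdef]; rw [hx0, Real.sqrt_zero]
      have hu : u x = 0 := Set.indicator_of_notMem hx _
      have : G x = 0 := by
        simp only [hGdef]; rw [hsx, hs0 x hx0]; ring
      rw [this, hu]; simp
  -- integrability of u*v1, u*v2
  have iuv1 : Integrable (fun x => u x * v1 x) volume := by
    refine (iww'.const_mul (Real.sqrt M)).mono
      (hu_m.mul (hw'm.norm.mul hsc.aestronglyMeasurable))
      (Filter.Eventually.of_forall fun x => ?_)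
    show ‖u x * v1 x‖ ≤ ‖Real.sqrt M * (‖w x‖ * ‖w' x‖)‖
    have hub : u x ≤ ‖w x‖ := by
      by_cases hx : x ∈ Function.support h
      · simp [hudef, Set.indicator_of_mem hx]
      · simp only [hudef, Set.indicator_of_notMem hx]; exact norm_nonneg _
    rw [Real.norm_of_nonneg (mul_nonneg (hu_nn x) (mul_nonneg (norm_nonneg _) (hsnn x))),
      Real.norm_of_nonneg (mul_nonneg (Real.sqrt_nonneg _)
        (mul_nonneg (norm_nonneg _) (norm_nonneg _)))]
    calc u x * v1 x ≤ ‖w x‖ * (‖w' x‖ * Real.sqrt M) := by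
          refine mul_le_mul hub ?_ (mul_nonneg (norm_nonneg _) (hsnn x)) (norm_nonneg _)
          exact mul_le_mul_of_nonneg_left (hsle x) (norm_nonneg _)
      _ = Real.sqrt M * (‖w x‖ * ‖w' x‖) := by ring
  have iuv2 : Integrable (fun x => u x * v2 x) volume := by
    refine (i2w.const_mul (Real.sqrt C / 2)).mono
      (hu_m.mul (hwc.norm.mul hs'c.abs).aestronglyMeasurable)
      (Filter.Eventually.of_forall fun x => ?_)
    show ‖u x * v2 x‖ ≤ ‖Real.sqrt C / 2 * ‖w x‖ ^ 2‖
    have hub : u x ≤ ‖w x‖ := by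
      by_cases hx : x ∈ Function.support h
      · simp [hudef, Set.indicator_of_mem hx]
      · simp only [hudef, Set.indicator_of_notMem hx]; exact norm_nonneg _
    rw [Real.norm_of_nonneg (mul_nonneg (hu_nn x) (mul_nonneg (norm_nonneg _) (abs_nonneg _))),
      Real.norm_of_nonneg (mul_nonneg (by positivity) (sq_nonneg _))]
    calc u x * v2 x ≤ ‖w x‖ * (‖w x‖ * (Real.sqrt C / 2)) := by
          refine mul_le_mul hub ?_ (mul_nonneg (norm_nonneg _) (abs_nonneg _)) (norm_nonneg _)
          exact mul_le_mul_of_nonneg_left (hs'bd x) (norm_nonneg _)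
      _ = Real.sqrt C / 2 * ‖w x‖ ^ 2 := by ring
  -- bound on S
  have hSle : S ≤ 2 * (Real.sqrt A * Real.sqrt B1) + Real.sqrt A * (Real.sqrt B2 / 2) := by
    have h1 : S ≤ ∫ x, (2 * (u x * v1 x) + u x * v2 x) :=
      integral_mono hG_i.abs ((iuv1.const_mul 2).add iuv2) hGbd
    rw [integral_add (iuv1.const_mul 2) iuv2, integral_const_mul] at h1
    exact h1.trans (add_le_add (by linarith [hCS1]) hCS2)
  -- main estimate: ∫ ‖w‖⁶ h ≤ S² A
  have hmain : (∫ x, ‖w x‖ ^ 6 * h x) ≤ S ^ 2 * A := by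
    have hptw : ∀ x, ‖w x‖ ^ 6 * h x
        ≤ Set.indicator (Function.support h) (fun y => S ^ 2 * ‖w y‖ ^ 2) x := by
      intro x
      by_cases hx : x ∈ Function.support h
      · rw [Set.indicator_of_mem hx]
        have h1 : ‖w x‖ ^ 6 * h x = (‖w x‖ ^ 2 * s x) ^ 2 * ‖w x‖ ^ 2 := by
          rw [mul_pow, ← hssq x]; ring
        rw [h1]
        refine mul_le_mul_of_nonneg_right ?_ (sq_nonneg _)
        exact pow_le_pow_left₀ (mul_nonneg (sq_nonneg _) (hsnn x)) (hgle x) 2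
      · rw [Set.indicator_of_notMem hx]
        have hx0 : h x = 0 := Function.notMem_support.mp hx
        rw [hx0, mul_zero]
    have h2 : (∫ x, ‖w x‖ ^ 6 * h x)
        ≤ ∫ x, Set.indicator (Function.support h) (fun y => S ^ 2 * ‖w y‖ ^ 2) x :=
      integral_mono_of_nonneg
        (Filter.Eventually.of_forall fun x =>
          mul_nonneg (pow_nonneg (norm_nonneg _) 6) (hpos x))
        ((i2w.const_mul (S ^ 2)).indicator hsupp_meas)
        (Filter.Eventually.of_forall hptw)
    rw [integral_indicator hsupp_meas, integral_const_mul] at h2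
    exact h2
  exact hmain.trans (myFinal hS0 hA0 hB10 hB20 hSle)
end
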